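/- arXiv:1510.06171 — 3 statements merged into one kernel-verified Lean document; each statement's English description precedes it below -/
import Mathlib

section
/- Let γ ∈ H²([0, L], ℝ³), L > 0, be parametrized by arclength with constant curvature |γ''| = 4π almost everywhere and with γ(0) = γ(L). Then L ≥ 1/2, and equality L = 1/2 holds if and only if γ parametrizes a round circle of radius 1/(4π). -/
open Real Set MeasureTheory Filter Topology
open scoped RealInnerProductSpace
set_option maxHeartbeats 2000000

private lemma cos2 (t : ℝ) : Real.cos (2*t) = 1 - 2 * Real.sin t ^ 2 := by
  have := Real.sin_sq_add_cos_sq t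
  rw [Real.cos_two_mul']; linarith

/-- Spherical triangle inequality in inner-product form. -/
private lemma step0 {E : Type*} [NormedAddCommGroup E] [InnerProductSpace ℝ E]
    {u v w : E} (hu : ‖u‖ = 1) (hv : ‖v‖ = 1) (hw : ‖w‖ = 1)
    {a b : ℝ} (ha : 0 ≤ a) (hb : 0 ≤ b) (hab : a + b ≤ π)
    (h1 : Real.cos a ≤ ⟪u, v⟫) (h2 : Real.cos b ≤ ⟪v, w⟫) :
    Real.cos (a + b) ≤ ⟪u, w⟫ := by
  set c₁ : ℝ := ⟪u, v⟫ with hc₁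
  set c₂ : ℝ := ⟪v, w⟫ with hc₂
  have hc₁1 : |c₁| ≤ 1 := by simpa [hu, hv] using abs_real_inner_le_norm u v
  have hc₂1 : |c₂| ≤ 1 := by simpa [hv, hw] using abs_real_inner_le_norm v w
  obtain ⟨hc₁l, hc₁u⟩ := abs_le.mp hc₁1
  obtain ⟨hc₂l, hc₂u⟩ := abs_le.mp hc₂1
  have hp : ‖u - c₁ • v‖^2 = 1 - c₁^2 := by
    rw [norm_sub_sq_real, real_inner_smul_right, norm_smul, hu, hv, Real.norm_eq_abs, ← hc₁]
    rw [mul_one, sq_abs]; ring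
  have hr : ‖w - c₂ • v‖^2 = 1 - c₂^2 := by
    rw [norm_sub_sq_real, real_inner_smul_right, norm_smul, hw, hv, Real.norm_eq_abs,
      real_inner_comm v w, ← hc₂]
    rw [mul_one, sq_abs]; ring
  have hpr : ⟪u - c₁ • v, w - c₂ • v⟫ = ⟪u, w⟫ - c₁ * c₂ := by
    simp only [inner_sub_left, inner_sub_right, real_inner_smul_left, real_inner_smul_right,
      ← hc₁, ← hc₂]
    rw [real_inner_self_eq_norm_sq, hv]
    ring
  have hpn : ‖u - c₁ • v‖ = Real.sqrt (1 - c₁^2) := by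
    rw [← hp, Real.sqrt_sq (norm_nonneg _)]
  have hrn : ‖w - c₂ • v‖ = Real.sqrt (1 - c₂^2) := by
    rw [← hr, Real.sqrt_sq (norm_nonneg _)]
  have hbound := abs_real_inner_le_norm (u - c₁ • v) (w - c₂ • v)
  rw [hpn, hrn, hpr] at hbound
  have hkey : c₁ * c₂ - Real.sqrt (1 - c₁^2) * Real.sqrt (1 - c₂^2) ≤ ⟪u, w⟫ := by
    have := (abs_le.mp hbound).1
    linarith
  have hα : Real.arccos c₁ ≤ a := by
    by_contra hcon
    push_neg at hcon
    have := Real.cos_lt_cos_of_nonneg_of_le_pi ha (Real.arccos_le_pi _) hcon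
    rw [Real.cos_arccos hc₁l hc₁u] at this
    linarith
  have hβ : Real.arccos c₂ ≤ b := by
    by_contra hcon
    push_neg at hcon
    have := Real.cos_lt_cos_of_nonneg_of_le_pi hb (Real.arccos_le_pi _) hcon
    rw [Real.cos_arccos hc₂l hc₂u] at this
    linarith
  calc Real.cos (a + b) ≤ Real.cos (Real.arccos c₁ + Real.arccos c₂) :=
        Real.cos_le_cos_of_nonneg_of_le_pi
          (add_nonneg (Real.arccos_nonneg _) (Real.arccos_nonneg _)) hab (by linarith)
    _ = c₁ * c₂ - Real.sqrt (1 - c₁^2) * Real.sqrt (1 - c₂^2) := by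
        rw [Real.cos_add, Real.cos_arccos hc₁l hc₁u, Real.cos_arccos hc₂l hc₂u,
          Real.sin_arccos, Real.sin_arccos]
    _ ≤ ⟪u, w⟫ := hkey

private lemma chain {E : Type*} [NormedAddCommGroup E] [InnerProductSpace ℝ E] :
    ∀ (n : ℕ) (p : ℕ → E) (a : ℝ), 0 ≤ a → (n : ℝ) * a ≤ π →
    (∀ i ≤ n, ‖p i‖ = 1) → (∀ i < n, Real.cos a ≤ ⟪p i, p (i+1)⟫) →
    Real.cos ((n : ℝ) * a) ≤ ⟪p 0, p n⟫ := by
  intro n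
  induction n with
  | zero =>
    intro p a ha _ hp _
    have h0 := hp 0 le_rfl
    simp only [Nat.cast_zero, zero_mul, Real.cos_zero]
    rw [real_inner_self_eq_norm_sq, h0]; norm_num
  | succ n ih =>
    intro p a ha hna hp hstep
    have hna' : (n : ℝ) * a ≤ π := by
      have : (n : ℝ) ≤ (n + 1 : ℕ) := by push_cast; linarith
      nlinarith [Nat.cast_nonneg (α := ℝ) n]
    have h1 := ih p a ha hna' (fun i hi => hp i (hi.trans (Nat.le_succ n)))
      (fun i hi => hstep i (hi.trans (Nat.lt_succ_self n)))
    have h2 := hstep n (Nat.lt_succ_self n)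
    have := step0 (hp 0 (Nat.zero_le _)) (hp n (Nat.le_succ n)) (hp (n+1) le_rfl)
      (mul_nonneg (Nat.cast_nonneg n) ha) ha (by push_cast at hna ⊢; linarith) h1 h2
    convert this using 2
    push_cast; ring

/-- Arc on the unit sphere: inner product of endpoints bounded below by cos of length. -/
lemma lemA {E : Type*} [NormedAddCommGroup E] [InnerProductSpace ℝ E]
    {U : ℝ → E} {K x y : ℝ} (hK : 0 < K) (hxy : x ≤ y)
    (hKd : K * (y - x) ≤ π)
    (hunit : ∀ t ∈ Icc x y, ‖U t‖ = 1)
    (hlip : ∀ s t, x ≤ s → s ≤ t → t ≤ y → ‖U t - U s‖ ≤ K * (t - s)) :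
    Real.cos (K * (y - x)) ≤ ⟪U x, U y⟫ := by
  have hπ := Real.pi_pos
  rcases eq_or_lt_of_le hxy with rfl | hxy'
  · simp only [sub_self, mul_zero, Real.cos_zero]
    have h := hunit x (by simp)
    rw [real_inner_self_eq_norm_sq, h]; norm_num
  rcases eq_or_lt_of_le hKd with hpi | hlt
  · rw [hpi, Real.cos_pi]
    have h1 := abs_real_inner_le_norm (U x) (U y)
    rw [hunit x ⟨le_refl x, hxy⟩, hunit y ⟨hxy, le_refl y⟩] at h1
    have := (abs_le.mp (by simpa using h1)).1
    linarith
  set c := K * (y - x) with hc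
  have hc0 : 0 < c := by
    have : 0 < y - x := by linarith
    positivity
  -- slope of arcsin at 0
  have harc : Tendsto (fun t : ℝ => Real.arcsin t / t) (𝓝[≠] 0) (𝓝 1) := by
    have h := Real.hasDerivAt_arcsin (x := 0) (by norm_num) (by norm_num)
    rw [hasDerivAt_iff_tendsto_slope] at h
    have h2 : Tendsto (slope Real.arcsin 0) (𝓝[≠] 0) (𝓝 1) := by
      convert h using 2
      norm_num
    refine h2.congr (fun t => ?_)
    simp [slope_def_field, Real.arcsin_zero]
  have htn0 : Tendsto (fun n : ℕ => c / (2 * (n : ℝ))) atTop (𝓝 0) := by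
    have := tendsto_const_div_atTop_nhds_zero_nat (c / 2)
    refine this.congr (fun n => ?_)
    rw [div_div]
  have htn : Tendsto (fun n : ℕ => c / (2 * (n : ℝ))) atTop (𝓝[≠] 0) := by
    refine tendsto_nhdsWithin_of_tendsto_nhds_of_eventually_within _ htn0 ?_
    filter_upwards [eventually_ge_atTop 1] with n hn
    have hn' : (0 : ℝ) < n := by exact_mod_cast hn
    have : 0 < c / (2 * (n : ℝ)) := by positivity
    exact this.ne'
  have hSn : Tendsto (fun n : ℕ => 2 * (n : ℝ) * Real.arcsin (c / (2 * n))) atTop (𝓝 c) := by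
    have h1 : Tendsto (fun n : ℕ => c * (Real.arcsin (c / (2 * n)) / (c / (2 * n))))
        atTop (𝓝 (c * 1)) := (harc.comp htn).const_mul c
    rw [mul_one] at h1
    refine h1.congr' ?_
    filter_upwards [eventually_ge_atTop 1] with n hn
    have hn' : (0 : ℝ) < n := by exact_mod_cast hn
    field_simp
  -- the main estimate for large n
  have key : ∀ n : ℕ, 1 ≤ n → c / (2 * n) ≤ 1 →
      2 * (n : ℝ) * Real.arcsin (c / (2 * n)) ≤ π →
      Real.cos (2 * (n : ℝ) * Real.arcsin (c / (2 * n))) ≤ ⟪U x, U y⟫ := by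
    intro n hn ht hπn
    have hn' : (0 : ℝ) < n := by exact_mod_cast hn
    set Δ : ℝ := (y - x) / n with hΔ
    have hΔ0 : 0 < Δ := by
      have : 0 < y - x := by linarith
      positivity
    have hcn : c / (2 * n) = K * Δ / 2 := by
      rw [hc, hΔ]; field_simp
    have htpos : 0 ≤ c / (2 * n) := by positivity
    set a : ℝ := 2 * Real.arcsin (c / (2 * n)) with ha
    have ha0 : 0 ≤ a := by
      have := Real.arcsin_nonneg.mpr htpos
      linarith
    have hna : (n : ℝ) * a = 2 * (n : ℝ) * Real.arcsin (c / (2 * n)) := by ring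
    have hmem : ∀ i : ℕ, i ≤ n → x + i * Δ ∈ Icc x y := by
      intro i hi
      have hi' : (i : ℝ) ≤ n := by exact_mod_cast hi
      constructor
      · nlinarith [Nat.cast_nonneg (α := ℝ) i]
      · have : (i : ℝ) * Δ ≤ n * Δ := by nlinarith
        have hnd : (n : ℝ) * Δ = y - x := by rw [hΔ]; field_simp
        nlinarith
    have hcos : Real.cos ((n : ℝ) * a) ≤ ⟪U (x + ((0:ℕ) : ℝ) * Δ), U (x + n * Δ)⟫ := by
      refine chain n (fun i => U (x + i * Δ)) a ha0 (by rw [hna]; exact hπn)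
        (fun i hi => hunit _ (hmem i hi)) ?_
      intro i hi
      have hi1 : i + 1 ≤ n := hi
      have hm1 := hmem i (le_of_lt hi)
      have hm2 := hmem (i+1) hi1
      have hstep : ‖U (x + (i+1 : ℕ) * Δ) - U (x + i * Δ)‖ ≤ K * Δ := by
        have h := hlip (x + i * Δ) (x + (i+1 : ℕ) * Δ) hm1.1
          (by push_cast; nlinarith) hm2.2
        calc ‖U (x + (i+1:ℕ) * Δ) - U (x + i * Δ)‖
            ≤ K * ((x + (i+1:ℕ) * Δ) - (x + i * Δ)) := h
          _ = K * Δ := by push_cast; ring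
      have hinner : 1 - (K * Δ)^2 / 2 ≤ ⟪U (x + i * Δ), U (x + (i+1:ℕ) * Δ)⟫ := by
        have hexp := norm_sub_sq_real (U (x + i * Δ)) (U (x + (i+1:ℕ) * Δ))
        rw [hunit _ hm1, hunit _ hm2] at hexp
        have hnn := norm_nonneg (U (x + (i+1:ℕ) * Δ) - U (x + i * Δ))
        have hsym : ‖U (x + i * Δ) - U (x + (i+1:ℕ) * Δ)‖
            = ‖U (x + (i+1:ℕ) * Δ) - U (x + i * Δ)‖ := norm_sub_rev _ _
        rw [hsym] at hexp
        nlinarith [hstep, norm_nonneg (U (x + (i+1:ℕ) * Δ) - U (x + i * Δ))]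
      have hcosa : Real.cos a = 1 - (K * Δ)^2 / 2 := by
        rw [ha, cos2, Real.sin_arcsin (by linarith) ht, hcn]
        ring
      rw [hcosa]
      exact_mod_cast hinner
    have h0 : x + ((0:ℕ) : ℝ) * Δ = x := by push_cast; ring
    have hn2 : x + (n : ℝ) * Δ = y := by rw [hΔ]; field_simp; ring
    rw [hna] at hcos
    rw [h0] at hcos
    rw [hn2] at hcos
    exact hcos
  -- pass to the limit
  have hevle : ∀ᶠ n : ℕ in atTop,
      Real.cos (2 * (n : ℝ) * Real.arcsin (c / (2 * n))) ≤ ⟪U x, U y⟫ := by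
    have hev1 : ∀ᶠ n : ℕ in atTop, 2 * (n : ℝ) * Real.arcsin (c / (2 * n)) < π :=
      hSn.eventually_lt_const hlt
    have hev2 : ∀ᶠ n : ℕ in atTop, c / (2 * (n : ℝ)) < 1 :=
      htn0.eventually_lt_const (by norm_num)
    filter_upwards [hev1, hev2, eventually_ge_atTop 1] with n h1 h2 h3
    exact key n h3 h2.le h1.le
  have hcc : Tendsto (fun n : ℕ => Real.cos (2 * (n : ℝ) * Real.arcsin (c / (2 * n))))
      atTop (𝓝 (Real.cos c)) := (Real.continuous_cos.tendsto c).comp hSn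
  exact le_of_tendsto hcc hevle


private lemma eq_of_integral_eq {f g : ℝ → ℝ} {a b : ℝ} (hab : a < b)
    (hf : ContinuousOn f (Icc a b)) (hg : ContinuousOn g (Icc a b))
    (hle : ∀ x ∈ Icc a b, g x ≤ f x)
    (hint : (∫ x in a..b, f x) ≤ ∫ x in a..b, g x) :
    ∀ x ∈ Icc a b, f x = g x := by
  intro x hx
  by_contra hne
  have hlt : g x < f x := lt_of_le_of_ne (hle x hx) (fun h => hne h.symm)
  have := intervalIntegral.integral_lt_integral_of_continuousOn_of_le_of_exists_lt hab hg hf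
    (fun t ht => hle t (Ioc_subset_Icc_self ht)) ⟨x, hx, hlt⟩
  linarith
private lemma eq_neg_of_inner_eq_neg_one {E : Type*} [NormedAddCommGroup E]
    [InnerProductSpace ℝ E] {a b : E} (ha : ‖a‖ = 1) (hb : ‖b‖ = 1)
    (h : ⟪a, b⟫ = -1) : a = -b := by
  have hx : ‖a + b‖^2 = 0 := by
    rw [norm_add_sq_real, ha, hb, h]; ring
  have h0 : a + b = 0 := by
    have := pow_eq_zero_iff (n := 2) (by norm_num) |>.mp hx
    exact norm_eq_zero.mp this
  exact eq_neg_of_add_eq_zero_left h0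

/-- **Shortest arc of constant curvature.**
Let `γ ∈ H²([0,L], ℝ³)`, `L > 0`, be parametrized by arclength (`|γ'| ≡ 1`, with `γ'`
absolutely continuous with a.e. derivative `γ''`), with constant curvature `|γ''| = 4π` a.e.
and coinciding endpoints `γ(0) = γ(L)`.  Then `L ≥ 1/2`, with equality if and only if `γ`
is a (once-covered) round circle of radius `1/(4π)`. -/
theorem stmt_5 (L : ℝ) (hL : 0 < L)
    (γ γ' γ'' : ℝ → EuclideanSpace ℝ (Fin 3))
    (hd1 : ∀ x ∈ Icc (0:ℝ) L, HasDerivAt γ (γ' x) x)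
    (harc : ∀ x ∈ Icc (0:ℝ) L, ‖γ' x‖ = 1)
    (hac : ∀ x ∈ Icc (0:ℝ) L, γ' x = γ' 0 + ∫ s in (0:ℝ)..x, γ'' s)
    (hint : IntegrableOn γ'' (Icc (0:ℝ) L))
    (hcurv : ∀ᵐ x ∂(volume.restrict (Icc (0:ℝ) L)), ‖γ'' x‖ = 4 * π)
    (hclosed : γ 0 = γ L) :
    1/2 ≤ L ∧
    (L = 1/2 ↔ ∃ (c u v : EuclideanSpace ℝ (Fin 3)),
      ‖u‖ = 1 ∧ ‖v‖ = 1 ∧ ⟪u, v⟫ = 0 ∧ Set.InjOn γ (Ico (0:ℝ) L) ∧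
      ∀ x ∈ Icc (0:ℝ) L,
        γ x = c + ((4*π)⁻¹ * Real.cos (4*π*x)) • u + ((4*π)⁻¹ * Real.sin (4*π*x)) • v) := by
  have hπ := Real.pi_pos
  have hK : (0:ℝ) < 4*π := by linarith
  have huIcc : uIcc (0:ℝ) L = Icc 0 L := uIcc_of_le hL.le
  have hγ''ii : ∀ s t : ℝ, 0 ≤ s → s ≤ t → t ≤ L → IntervalIntegrable γ'' volume s t := by
    intro s t hs hst ht
    refine (hint.mono_set ?_).intervalIntegrable
    rw [uIcc_of_le hst]
    exact Icc_subset_Icc hs ht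
  have hae : ∀ᵐ x ∂(volume : Measure ℝ), x ∈ Icc (0:ℝ) L → ‖γ'' x‖ = 4*π :=
    (ae_restrict_iff' measurableSet_Icc).mp hcurv
  have hTlip : ∀ s t, 0 ≤ s → s ≤ t → t ≤ L → ‖γ' t - γ' s‖ ≤ 4*π*(t - s) := by
    intro s t hs hst htL
    have h1 := hac t ⟨hs.trans hst, htL⟩
    have h2 := hac s ⟨hs, hst.trans htL⟩
    have hsub : γ' t - γ' s = ∫ u in s..t, γ'' u := by
      rw [h1, h2, add_sub_add_left_eq_sub]
      exact intervalIntegral.integral_interval_sub_left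
        (hγ''ii 0 t le_rfl (hs.trans hst) htL) (hγ''ii 0 s le_rfl hs (hst.trans htL))
    rw [hsub]
    have hb : ∀ᵐ x ∂(volume : Measure ℝ), x ∈ Set.uIoc s t → ‖γ'' x‖ ≤ 4*π := by
      filter_upwards [hae] with x hx hmem
      rw [Set.uIoc_of_le hst] at hmem
      exact le_of_eq (hx ⟨hs.trans hmem.1.le, hmem.2.trans htL⟩)
    have := intervalIntegral.norm_integral_le_of_norm_le_const_ae hb
    rwa [abs_of_nonneg (by linarith)] at this
  have hTcont : ContinuousOn γ' (Icc 0 L) := by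
    have hl : LipschitzOnWith (4*π).toNNReal γ' (Icc (0:ℝ) L) := by
      apply LipschitzOnWith.of_dist_le_mul
      intro s hs t ht
      rw [dist_eq_norm, Real.dist_eq, Real.coe_toNNReal _ hK.le]
      rcases le_total s t with h | h
      · rw [norm_sub_rev, abs_of_nonpos (by linarith)]
        have := hTlip s t hs.1 h ht.2
        linarith
      · rw [abs_of_nonneg (by linarith)]
        have := hTlip t s ht.1 h hs.2
        linarith
    exact hl.continuousOn
  have hInner0 : ∀ w : EuclideanSpace ℝ (Fin 3), ∫ x in (0:ℝ)..L, ⟪γ' x, w⟫ = 0 := by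
    intro w
    have hderiv : ∀ x ∈ uIcc (0:ℝ) L, HasDerivAt (fun t => ⟪γ t, w⟫) ⟪γ' x, w⟫ x := by
      intro x hx
      rw [huIcc] at hx
      simpa using (hd1 x hx).inner (𝕜 := ℝ) (hasDerivAt_const x w)
    have hii : IntervalIntegrable (fun x => ⟪γ' x, w⟫) volume 0 L := by
      apply ContinuousOn.intervalIntegrable
      rw [huIcc]
      exact hTcont.inner continuousOn_const
    rw [intervalIntegral.integral_eq_sub_of_hasDerivAt hderiv hii, hclosed, sub_self]
  have hcosFTC : ∀ a b s0 : ℝ, (∫ x in a..b, Real.cos (4*π*(x - s0))) =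
      (4*π)⁻¹ * (Real.sin (4*π*(b - s0)) - Real.sin (4*π*(a - s0))) := by
    intro a b s0
    have hder : ∀ x ∈ uIcc a b, HasDerivAt (fun t => (4*π)⁻¹ * Real.sin (4*π*(t - s0)))
        (Real.cos (4*π*(x - s0))) x := by
      intro x _
      have h1 : HasDerivAt (fun t : ℝ => 4*π*(t - s0)) (4*π) x := by
        simpa using ((hasDerivAt_id x).sub_const s0).const_mul (4*π)
      have h2 := (Real.hasDerivAt_sin (4*π*(x - s0))).comp x h1
      have h3 := h2.const_mul (4*π)⁻¹
      exact h3.congr_deriv (by rw [mul_comm (Real.cos _), ← mul_assoc, inv_mul_cancel₀ hK.ne', one_mul])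
    rw [intervalIntegral.integral_eq_sub_of_hasDerivAt hder
      (Continuous.intervalIntegrable (by fun_prop) a b)]
    ring
  have hmain : 1/2 ≤ L := by
    by_contra hcon
    push_neg at hcon
    have hhalf : L/2 ∈ Icc (0:ℝ) L := ⟨by linarith, by linarith⟩
    have hptw : ∀ x ∈ Icc (0:ℝ) L, Real.cos (4*π*(x - L/2)) ≤ ⟪γ' x, γ' (L/2)⟫ := by
      intro x hx
      rcases le_total x (L/2) with h | h
      · have hA := lemA (U := γ') hK h (by nlinarith [hx.1])
          (fun t ht => harc t ⟨hx.1.trans ht.1, ht.2.trans hhalf.2⟩)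
          (fun s t hs hst htl => hTlip s t (hx.1.trans hs) hst (htl.trans hhalf.2))
        rw [show (4*π*(x - L/2)) = -(4*π*(L/2 - x)) by ring, Real.cos_neg]
        exact hA
      · have hA := lemA (U := γ') hK h (by nlinarith [hx.2])
          (fun t ht => harc t ⟨hhalf.1.trans ht.1, ht.2.trans hx.2⟩)
          (fun s t hs hst htl => hTlip s t (hhalf.1.trans hs) hst (htl.trans hx.2))
        rw [real_inner_comm]
        exact hA
    have hcosii : IntervalIntegrable (fun x => Real.cos (4*π*(x - L/2))) volume 0 L :=
      (Continuous.intervalIntegrable (by fun_prop) 0 L)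
    have hfii : IntervalIntegrable (fun x => ⟪γ' x, γ' (L/2)⟫) volume 0 L := by
      apply ContinuousOn.intervalIntegrable
      rw [huIcc]
      exact hTcont.inner continuousOn_const
    have hmono := intervalIntegral.integral_mono_on hL.le hcosii hfii hptw
    rw [hInner0, hcosFTC 0 L (L/2)] at hmono
    rw [show 4*π*(L - L/2) = 2*π*L by ring, show 4*π*((0:ℝ) - L/2) = -(2*π*L) by ring,
      Real.sin_neg] at hmono
    have hsin : 0 < Real.sin (2*π*L) :=
      Real.sin_pos_of_pos_of_lt_pi (by positivity) (by nlinarith)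
    have hip : (0:ℝ) < (4*π)⁻¹ := by positivity
    nlinarith
  refine ⟨hmain, ?_, ?_⟩
  · -- forward: L = 1/2 → circle
    intro hLeq
    subst hLeq
    have h14 : (1/4 : ℝ) ∈ Icc (0:ℝ) (1/2) := by norm_num
    have hptw : ∀ x ∈ Icc (0:ℝ) (1/2), Real.cos (4*π*(x - 1/4)) ≤ ⟪γ' x, γ' (1/4:ℝ)⟫ := by
      intro x hx
      rcases le_total x (1/4) with h | h
      · have hA := lemA (U := γ') hK h (by nlinarith [hx.1])
          (fun t ht => harc t ⟨hx.1.trans ht.1, ht.2.trans h14.2⟩)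
          (fun s t hs hst htl => hTlip s t (hx.1.trans hs) hst (htl.trans h14.2))
        rw [show (4*π*(x - 1/4)) = -(4*π*(1/4 - x)) by ring, Real.cos_neg]
        exact hA
      · have hA := lemA (U := γ') hK h (by nlinarith [hx.2])
          (fun t ht => harc t ⟨h14.1.trans ht.1, ht.2.trans hx.2⟩)
          (fun s t hs hst htl => hTlip s t (h14.1.trans hs) hst (htl.trans hx.2))
        rw [real_inner_comm]
        exact hA
    have hfc : ContinuousOn (fun x => ⟪γ' x, γ' (1/4:ℝ)⟫) (Icc (0:ℝ) (1/2)) :=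
      hTcont.inner continuousOn_const
    have hgc : ContinuousOn (fun x => Real.cos (4*π*(x - 1/4))) (Icc (0:ℝ) (1/2)) :=
      (Continuous.continuousOn (by fun_prop))
    have hcos0 : (∫ x in (0:ℝ)..(1/2:ℝ), Real.cos (4*π*(x - 1/4))) = 0 := by
      rw [hcosFTC]
      rw [show 4*π*((1:ℝ)/2 - 1/4) = π by ring, show 4*π*((0:ℝ) - 1/4) = -π by ring,
        Real.sin_neg, Real.sin_pi]
      ring
    have heqf : ∀ x ∈ Icc (0:ℝ) (1/2), ⟪γ' x, γ' (1/4:ℝ)⟫ = Real.cos (4*π*(x - 1/4)) := by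
      apply eq_of_integral_eq (by norm_num) hfc hgc hptw
      rw [hInner0 (γ' (1/4:ℝ)), hcos0]
    have hq1 : ‖γ' (1/4:ℝ)‖ = 1 := harc _ h14
    have hT01 : γ' 0 = γ' (1/2 : ℝ) := by
      have h0 : ⟪γ' 0, γ' (1/4:ℝ)⟫ = -1 := by
        have := heqf 0 (by norm_num)
        rwa [show 4*π*((0:ℝ) - 1/4) = -π by ring, Real.cos_neg, Real.cos_pi] at this
      have h2 : ⟪γ' (1/2:ℝ), γ' (1/4:ℝ)⟫ = -1 := by
        have := heqf (1/2) (by norm_num)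
        rwa [show 4*π*((1:ℝ)/2 - 1/4) = π by ring, Real.cos_pi] at this
      rw [eq_neg_of_inner_eq_neg_one (harc 0 (by norm_num)) hq1 h0,
        eq_neg_of_inner_eq_neg_one (harc (1/2:ℝ) (by norm_num)) hq1 h2]
    -- periodic-ish extension
    set Tt : ℝ → EuclideanSpace ℝ (Fin 3) :=
      fun x => if x < 0 then γ' (x + 1/2) else γ' x with hTt
    have hTtval : ∀ x : ℝ, 0 ≤ x → Tt x = γ' x := by
      intro x hx; simp [hTt, not_lt.mpr hx]
    have hTtvneg : ∀ x : ℝ, x < 0 → Tt x = γ' (x + 1/2) := by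
      intro x hx; simp [hTt, hx]
    have hTtunit : ∀ x ∈ Icc (-(1/4) : ℝ) (1/2:ℝ), ‖Tt x‖ = 1 := by
      intro x hx
      by_cases h : x < 0
      · rw [hTtvneg x h]; exact harc _ ⟨by linarith [hx.1], by linarith⟩
      · rw [hTtval x (not_lt.mp h)]; exact harc _ ⟨not_lt.mp h, hx.2⟩
    have hTtlip : ∀ s t : ℝ, -(1/4) ≤ s → s ≤ t → t ≤ 1/2 → ‖Tt t - Tt s‖ ≤ 4*π*(t - s) := by
      intro s t hs hst ht
      by_cases hs0 : s < 0
      · by_cases ht0 : t < 0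
        · rw [hTtvneg s hs0, hTtvneg t ht0]
          have := hTlip (s + 1/2) (t + 1/2) (by linarith) (by linarith) (by linarith)
          calc ‖γ' (t + 1/2) - γ' (s + 1/2)‖ ≤ 4*π*((t + 1/2) - (s + 1/2)) := this
            _ = 4*π*(t - s) := by ring
        · rw [hTtvneg s hs0, hTtval t (not_lt.mp ht0)]
          have h1 := hTlip 0 t le_rfl (not_lt.mp ht0) ht
          have h2 := hTlip (s+1/2) (1/2) (by linarith) (by linarith) le_rfl
          calc ‖γ' t - γ' (s + 1/2)‖
              ≤ ‖γ' t - γ' 0‖ + ‖γ' 0 - γ' (s + 1/2)‖ :=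
                norm_sub_le_norm_sub_add_norm_sub _ _ _
            _ = ‖γ' t - γ' 0‖ + ‖γ' (1/2:ℝ) - γ' (s + 1/2)‖ := by rw [hT01]
            _ ≤ 4*π*(t - 0) + 4*π*(1/2 - (s + 1/2)) := add_le_add h1 h2
            _ = 4*π*(t - s) := by ring
      · have ht0 : ¬ t < 0 := by
          intro hcon; exact hs0 (lt_of_le_of_lt hst hcon)
        rw [hTtval s (not_lt.mp hs0), hTtval t (not_lt.mp ht0)]
        exact hTlip s t (not_lt.mp hs0) hst ht
    have hTtcont : ContinuousOn Tt (Icc (-(1/4):ℝ) (1/2:ℝ)) := by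
      have hl : LipschitzOnWith (4*π).toNNReal Tt (Icc (-(1/4):ℝ) (1/2:ℝ)) := by
        apply LipschitzOnWith.of_dist_le_mul
        intro s hs t ht
        rw [dist_eq_norm, Real.dist_eq, Real.coe_toNNReal _ hK.le]
        rcases le_total s t with h | h
        · rw [norm_sub_rev, abs_of_nonpos (by linarith)]
          have := hTtlip s t hs.1 h ht.2
          linarith
        · rw [abs_of_nonneg (by linarith)]
          have := hTtlip t s ht.1 h hs.2
          linarith
      exact hl.continuousOn
    have hbase : ∀ s₀ : ℝ, 0 ≤ s₀ → s₀ ≤ 1/4 → ∀ x ∈ Icc (s₀ - 1/4) (s₀ + 1/4),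
        ⟪Tt x, Tt s₀⟫ = Real.cos (4*π*(x - s₀)) := by
      intro s₀ hs₀0 hs₀4
      have hsub : Icc (s₀ - 1/4) (s₀ + 1/4) ⊆ Icc (-(1/4):ℝ) (1/2:ℝ) :=
        Icc_subset_Icc (by linarith) (by linarith)
      have hup : ∀ x ∈ Icc (s₀ - 1/4) (s₀ + 1/4),
          Real.cos (4*π*(x - s₀)) ≤ ⟪Tt x, Tt s₀⟫ := by
        intro x hx
        rcases le_total x s₀ with h | h
        · have hA := lemA (U := Tt) hK h (by nlinarith [hx.1])
            (fun t ht => hTtunit t ⟨by linarith [hx.1, ht.1], by linarith [ht.2]⟩)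
            (fun s t hs hst htl => hTtlip s t (by linarith [hx.1]) hst (by linarith))
          rw [show (4*π*(x - s₀)) = -(4*π*(s₀ - x)) by ring, Real.cos_neg]
          exact hA
        · have hA := lemA (U := Tt) hK h (by nlinarith [hx.2])
            (fun t ht => hTtunit t ⟨by linarith [ht.1], by linarith [ht.2, hx.2]⟩)
            (fun s t hs hst htl => hTtlip s t (by linarith) hst (by linarith [hx.2]))
          rw [real_inner_comm]
          exact hA
      have hw : ∀ w : EuclideanSpace ℝ (Fin 3),
          (∫ x in (s₀-1/4)..(s₀+1/4), ⟪Tt x, w⟫) = 0 := by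
        intro w
        have hc1 : ContinuousOn (fun x => ⟪Tt x, w⟫) (Icc (-(1/4):ℝ) (1/2:ℝ)) :=
          hTtcont.inner continuousOn_const
        have hi1 : IntervalIntegrable (fun x => ⟪Tt x, w⟫) volume (s₀-1/4) 0 := by
          apply ContinuousOn.intervalIntegrable
          rw [uIcc_of_le (by linarith)]
          exact hc1.mono (Icc_subset_Icc (by linarith) (by norm_num))
        have hi2 : IntervalIntegrable (fun x => ⟪Tt x, w⟫) volume 0 (s₀+1/4) := by
          apply ContinuousOn.intervalIntegrable
          rw [uIcc_of_le (by linarith)]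
          exact hc1.mono (Icc_subset_Icc (by norm_num) (by linarith))
        have hsplit := intervalIntegral.integral_add_adjacent_intervals hi1 hi2
        have hleft : (∫ x in (s₀-1/4)..(0:ℝ), ⟪Tt x, w⟫)
            = ∫ x in (s₀+1/4)..(1/2:ℝ), ⟪γ' x, w⟫ := by
          have hcongr : EqOn (fun x => ⟪Tt x, w⟫) (fun x => ⟪γ' (x + 1/2), w⟫)
              (uIcc (s₀-1/4) 0) := by
            intro x hx
            rw [uIcc_of_le (by linarith)] at hx
            by_cases h : x < 0
            · simp only
              rw [hTtvneg x h]
            · have hx0 : x = 0 := le_antisymm hx.2 (not_lt.mp h)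
              simp only
              rw [hx0, hTtval 0 le_rfl, hT01]
              norm_num
          rw [intervalIntegral.integral_congr hcongr,
            intervalIntegral.integral_comp_add_right (fun x => ⟪γ' x, w⟫) (1/2),
            show s₀ - 1/4 + 1/2 = s₀ + 1/4 by ring, show (0:ℝ) + 1/2 = 1/2 by ring]
        have hright : (∫ x in (0:ℝ)..(s₀+1/4), ⟪Tt x, w⟫)
            = ∫ x in (0:ℝ)..(s₀+1/4), ⟪γ' x, w⟫ := by
          apply intervalIntegral.integral_congr
          intro x hx
          rw [uIcc_of_le (by linarith)] at hx
          simp only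
          rw [hTtval x hx.1]
        have hii3 : IntervalIntegrable (fun x => ⟪γ' x, w⟫) volume 0 (s₀+1/4) := by
          apply ContinuousOn.intervalIntegrable
          rw [uIcc_of_le (by linarith)]
          exact (hTcont.inner continuousOn_const).mono (Icc_subset_Icc (by norm_num) (by linarith))
        have hii4 : IntervalIntegrable (fun x => ⟪γ' x, w⟫) volume (s₀+1/4) (1/2:ℝ) := by
          apply ContinuousOn.intervalIntegrable
          rw [uIcc_of_le (by linarith)]
          exact (hTcont.inner continuousOn_const).mono (Icc_subset_Icc (by linarith) le_rfl)
        have hfull := intervalIntegral.integral_add_adjacent_intervals hii3 hii4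
        have h0 := hInner0 w
        rw [← hsplit, hleft, hright]
        linarith [hfull, h0]
      have hcosint : (∫ x in (s₀-1/4)..(s₀+1/4), Real.cos (4*π*(x - s₀))) = 0 := by
        rw [hcosFTC]
        rw [show 4*π*((s₀+1/4) - s₀) = π by ring, show 4*π*((s₀-1/4) - s₀) = -π by ring,
          Real.sin_neg, Real.sin_pi]
        ring
      have hcc : ContinuousOn (fun x => ⟪Tt x, Tt s₀⟫) (Icc (s₀-1/4) (s₀+1/4)) :=
        (hTtcont.inner continuousOn_const).mono hsub
      have hgc2 : ContinuousOn (fun x => Real.cos (4*π*(x - s₀))) (Icc (s₀-1/4) (s₀+1/4)) :=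
        (Continuous.continuousOn (by fun_prop))
      exact eq_of_integral_eq (by linarith) hcc hgc2 hup
        (by rw [hw (Tt s₀), hcosint])
    have hTt0 : Tt 0 = γ' 0 := hTtval 0 le_rfl
    have hA' : ∀ x ∈ Icc (0:ℝ) (1/2:ℝ), ⟪γ' x, γ' 0⟫ = Real.cos (4*π*x) := by
      intro x hx
      rcases le_total x (1/4) with h | h
      · have := hbase 0 le_rfl (by norm_num) x ⟨by linarith [hx.1], by linarith⟩
        rw [hTtval x hx.1, hTt0, sub_zero] at this
        exact this
      · rcases lt_or_eq_of_le hx.2 with h2 | h2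
        · have := hbase 0 le_rfl (by norm_num) (x - 1/2) ⟨by linarith, by linarith⟩
          rw [hTtvneg (x - 1/2) (by linarith), hTt0,
            show x - 1/2 + 1/2 = x by ring, sub_zero,
            show 4*π*(x - 1/2) = 4*π*x - 2*π by ring, Real.cos_sub_two_pi] at this
          exact this
        · rw [h2, ← hT01, real_inner_self_eq_norm_sq, harc 0 (by norm_num),
            show 4*π*((1:ℝ)/2) = 2*π by ring, Real.cos_two_pi]
          norm_num
    have hB' : ∀ x ∈ Icc (0:ℝ) (1/2:ℝ), ⟪γ' x, γ' (1/8:ℝ)⟫ = Real.cos (4*π*(x - 1/8)) := by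
      intro x hx
      have hTt8 : Tt (1/8:ℝ) = γ' (1/8:ℝ) := hTtval _ (by norm_num)
      rcases le_total x (3/8) with h | h
      · have := hbase (1/8) (by norm_num) (by norm_num) x ⟨by linarith [hx.1], by linarith⟩
        rw [hTtval x hx.1, hTt8] at this
        exact this
      · rcases lt_or_eq_of_le hx.2 with h2 | h2
        · have := hbase (1/8) (by norm_num) (by norm_num) (x - 1/2) ⟨by linarith, by linarith⟩
          rw [hTtvneg (x - 1/2) (by linarith), hTt8,
            show x - 1/2 + 1/2 = x by ring,
            show 4*π*(x - 1/2 - 1/8) = 4*π*(x - 1/8) - 2*π by ring, Real.cos_sub_two_pi] at this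
          exact this
        · have h0 := hbase (1/8) (by norm_num) (by norm_num) 0 ⟨by norm_num, by norm_num⟩
          rw [hTt0, hTt8] at h0
          rw [h2, ← hT01, h0,
            show 4*π*((0:ℝ) - 1/8) = -(π/2) by ring,
            show 4*π*((1:ℝ)/2 - 1/8) = -(π/2) + 2*π by ring,
            Real.cos_add_two_pi]
    have he1 : ‖γ' 0‖ = 1 := harc 0 (by norm_num)
    have he2 : ‖γ' (1/8:ℝ)‖ = 1 := harc _ (by norm_num)
    have he12 : ⟪γ' (1/8:ℝ), γ' 0⟫ = 0 := by
      have := hA' (1/8) (by norm_num)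
      rwa [show 4*π*((1:ℝ)/8) = π/2 by ring, Real.cos_pi_div_two] at this
    have he21 : ⟪γ' 0, γ' (1/8:ℝ)⟫ = 0 := by
      rw [real_inner_comm]; exact he12
    have hTfor : ∀ x ∈ Icc (0:ℝ) (1/2:ℝ),
        γ' x = Real.cos (4*π*x) • γ' 0 + Real.sin (4*π*x) • γ' (1/8:ℝ) := by
      intro x hx
      have h1 := hA' x hx
      have h2 : ⟪γ' x, γ' (1/8:ℝ)⟫ = Real.sin (4*π*x) := by
        have := hB' x hx
        rw [show 4*π*(x - 1/8) = 4*π*x - π/2 by ring, Real.cos_sub,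
          Real.cos_pi_div_two, Real.sin_pi_div_two] at this
        rw [this]; ring
      have hnx : ‖γ' x‖ = 1 := harc x hx
      have hxx : ⟪γ' x, Real.cos (4*π*x) • γ' 0 + Real.sin (4*π*x) • γ' (1/8:ℝ)⟫ = 1 := by
        rw [inner_add_right, real_inner_smul_right, real_inner_smul_right, h1, h2]
        nlinarith [Real.sin_sq_add_cos_sq (4*π*x)]
      have hby : ‖Real.cos (4*π*x) • γ' 0 + Real.sin (4*π*x) • γ' (1/8:ℝ)‖^2 = 1 := by
        rw [norm_add_sq_real, real_inner_smul_left, real_inner_smul_right, he21,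
          norm_smul, norm_smul, he1, he2]
        simp only [Real.norm_eq_abs, mul_one, sq_abs]
        nlinarith [Real.sin_sq_add_cos_sq (4*π*x)]
      have hkey : ‖γ' x - (Real.cos (4*π*x) • γ' 0 + Real.sin (4*π*x) • γ' (1/8:ℝ))‖^2 = 0 := by
        rw [norm_sub_sq_real, hxx, hby, hnx]
        norm_num
      have hz := norm_eq_zero.mp (pow_eq_zero_iff (n := 2) (by norm_num) |>.mp hkey)
      exact sub_eq_zero.mp hz
    -- integrate to get γ
    have hsinFTC : ∀ x : ℝ, (∫ t in (0:ℝ)..x, Real.sin (4*π*t))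
        = (4*π)⁻¹ * (1 - Real.cos (4*π*x)) := by
      intro x
      have hder : ∀ t ∈ uIcc (0:ℝ) x, HasDerivAt (fun t => -((4*π)⁻¹ * Real.cos (4*π*t)))
          (Real.sin (4*π*t)) t := by
        intro t _
        have h1 : HasDerivAt (fun t : ℝ => 4*π*t) (4*π) t := by
          simpa using (hasDerivAt_id t).const_mul (4*π)
        have h2 := (Real.hasDerivAt_cos (4*π*t)).comp t h1
        have h3 := (h2.const_mul (4*π)⁻¹).neg
        exact h3.congr_deriv (by rw [neg_mul, mul_neg, neg_neg, mul_comm (Real.sin _), ← mul_assoc, inv_mul_cancel₀ hK.ne', one_mul])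
      rw [intervalIntegral.integral_eq_sub_of_hasDerivAt hder
        (Continuous.intervalIntegrable (by fun_prop) _ _)]
      rw [mul_zero, Real.cos_zero]
      ring
    have hcos0FTC : ∀ x : ℝ, (∫ t in (0:ℝ)..x, Real.cos (4*π*t))
        = (4*π)⁻¹ * Real.sin (4*π*x) := by
      intro x
      have hder : ∀ t ∈ uIcc (0:ℝ) x, HasDerivAt (fun t => (4*π)⁻¹ * Real.sin (4*π*t))
          (Real.cos (4*π*t)) t := by
        intro t _
        have h1 : HasDerivAt (fun t : ℝ => 4*π*t) (4*π) t := by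
          simpa using (hasDerivAt_id t).const_mul (4*π)
        have h2 := (Real.hasDerivAt_sin (4*π*t)).comp t h1
        have h3 := h2.const_mul (4*π)⁻¹
        exact h3.congr_deriv (by rw [mul_comm (Real.cos _), ← mul_assoc, inv_mul_cancel₀ hK.ne', one_mul])
      rw [intervalIntegral.integral_eq_sub_of_hasDerivAt hder
        (Continuous.intervalIntegrable (by fun_prop) _ _)]
      rw [mul_zero, Real.sin_zero]
      ring
    have hγfor : ∀ x ∈ Icc (0:ℝ) (1/2:ℝ), γ x = γ 0
        + ((4*π)⁻¹ * Real.sin (4*π*x)) • γ' 0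
        + ((4*π)⁻¹ * (1 - Real.cos (4*π*x))) • γ' (1/8:ℝ) := by
      intro x hx
      have hu2 : uIcc (0:ℝ) x = Icc 0 x := uIcc_of_le hx.1
      have hFTCγ : (∫ t in (0:ℝ)..x, γ' t) = γ x - γ 0 := by
        apply intervalIntegral.integral_eq_sub_of_hasDerivAt
        · intro t ht; rw [hu2] at ht; exact hd1 t ⟨ht.1, ht.2.trans hx.2⟩
        · apply ContinuousOn.intervalIntegrable
          rw [hu2]
          exact hTcont.mono (Icc_subset_Icc le_rfl hx.2)
      have hcongr : (∫ t in (0:ℝ)..x, γ' t)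
          = ∫ t in (0:ℝ)..x, (Real.cos (4*π*t) • γ' 0 + Real.sin (4*π*t) • γ' (1/8:ℝ)) := by
        apply intervalIntegral.integral_congr
        intro t ht; rw [hu2] at ht
        exact hTfor t ⟨ht.1, ht.2.trans hx.2⟩
      have hsplit : (∫ t in (0:ℝ)..x, (Real.cos (4*π*t) • γ' 0 + Real.sin (4*π*t) • γ' (1/8:ℝ)))
          = (∫ t in (0:ℝ)..x, Real.cos (4*π*t)) • γ' 0
            + (∫ t in (0:ℝ)..x, Real.sin (4*π*t)) • γ' (1/8:ℝ) := by
        rw [intervalIntegral.integral_add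
          (Continuous.intervalIntegrable (by fun_prop) _ _)
          (Continuous.intervalIntegrable (by fun_prop) _ _),
          intervalIntegral.integral_smul_const, intervalIntegral.integral_smul_const]
      have hfin := hFTCγ
      rw [hcongr, hsplit, hcos0FTC, hsinFTC] at hfin
      have h5 : γ x = γ 0 + (((4*π)⁻¹ * Real.sin (4*π*x)) • γ' 0
          + ((4*π)⁻¹ * (1 - Real.cos (4*π*x))) • γ' (1/8:ℝ)) :=
        sub_eq_iff_eq_add'.mp hfin.symm
      rw [h5]; abel
    refine ⟨γ 0 + (4*π)⁻¹ • γ' (1/8:ℝ), -γ' (1/8:ℝ), γ' 0,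
      by rwa [norm_neg], he1, by rw [inner_neg_left, he12, neg_zero], ?_, ?_⟩
    · -- injectivity
      intro x hx y hy hxyeq
      have hinner1 : ∀ z ∈ Icc (0:ℝ) (1/2:ℝ),
          ⟪γ z, γ' 0⟫ = ⟪γ 0, γ' 0⟫ + (4*π)⁻¹ * Real.sin (4*π*z) := by
        intro z hz
        rw [hγfor z hz, inner_add_left, inner_add_left, real_inner_smul_left,
          real_inner_smul_left, he12, real_inner_self_eq_norm_sq, he1]
        ring
      have hinner2 : ∀ z ∈ Icc (0:ℝ) (1/2:ℝ),
          ⟪γ z, γ' (1/8:ℝ)⟫ = ⟪γ 0, γ' (1/8:ℝ)⟫ + (4*π)⁻¹ * (1 - Real.cos (4*π*z)) := by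
        intro z hz
        rw [hγfor z hz, inner_add_left, inner_add_left, real_inner_smul_left,
          real_inner_smul_left, he21, real_inner_self_eq_norm_sq, he2]
        ring
      have hxI : x ∈ Icc (0:ℝ) (1/2:ℝ) := ⟨hx.1, hx.2.le⟩
      have hyI : y ∈ Icc (0:ℝ) (1/2:ℝ) := ⟨hy.1, hy.2.le⟩
      have hs : Real.sin (4*π*x) = Real.sin (4*π*y) := by
        have h1 := hinner1 x hxI
        have h2 := hinner1 y hyI
        rw [hxyeq] at h1
        have h3 : (4*π)⁻¹ * Real.sin (4*π*x) = (4*π)⁻¹ * Real.sin (4*π*y) := by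
          rw [h2] at h1; linarith
        exact mul_left_cancel₀ (inv_ne_zero (ne_of_gt hK)) h3
      have hcs : Real.cos (4*π*x) = Real.cos (4*π*y) := by
        have h1 := hinner2 x hxI
        have h2 := hinner2 y hyI
        rw [hxyeq] at h1
        have h3 : (4*π)⁻¹ * (1 - Real.cos (4*π*x)) = (4*π)⁻¹ * (1 - Real.cos (4*π*y)) := by
          rw [h2] at h1; linarith
        have := mul_left_cancel₀ (inv_ne_zero (ne_of_gt hK)) h3
        linarith
      have hone : Real.cos (4*π*(x - y)) = 1 := by
        rw [show 4*π*(x-y) = 4*π*x - 4*π*y by ring, Real.cos_sub, hs, hcs]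
        nlinarith [Real.sin_sq_add_cos_sq (4*π*y)]
      have hzx := (Real.cos_eq_one_iff_of_lt_of_lt
        (by nlinarith [hx.1, hx.2, hy.1, hy.2]) (by nlinarith [hx.1, hx.2, hy.1, hy.2])).mp hone
      have h40 : x - y = 0 := by
        rcases mul_eq_zero.mp hzx with h | h
        · exact absurd h (ne_of_gt hK)
        · exact h
      linarith
    · -- the formula
      intro x hx
      rw [hγfor x hx]
      module
  · -- backward: circle data → L = 1/2
    rintro ⟨c, u, v, hu, hv, huv, hinj, hform⟩
    by_contra hne
    have hlt : 1/2 < L := lt_of_le_of_ne hmain (Ne.symm hne)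
    have hf0 := hform 0 ⟨le_rfl, hL.le⟩
    have hfh := hform (1/2) ⟨by norm_num, by linarith⟩
    rw [mul_zero, Real.cos_zero, Real.sin_zero, mul_one, mul_zero, zero_smul, add_zero] at hf0
    rw [show 4*π*((1:ℝ)/2) = 2*π by ring, Real.cos_two_pi, Real.sin_two_pi,
      mul_one, mul_zero, zero_smul, add_zero] at hfh
    have heq : γ 0 = γ (1/2:ℝ) := by rw [hf0, hfh]
    have := hinj ⟨le_rfl, hL⟩ ⟨by norm_num, hlt⟩ heq
    norm_num at this
end

section
/- For coprime integers a ≥ 2, b ≥ 2 there exist constants C > 0 and ρ₀ > 0 (depending only on a, b) such that for all ρ ∈ (0, ρ₀]: (i) the length satisfies |𝓛(τ_ρ) − 2πa| ≤ Cρ², and (ii) the bending energy satisfies E_bend(τ_ρ) ≤ 2πa + Cρ², where E_bend(γ) = ∫ κ² ds = ∫₀^{2π} |γ'' ∧ γ'|²/|γ'|⁵ dt. Consequently the rescaled arclength-parametrized unit-length curve τ̃_ρ satisfies E_bend(τ̃_ρ) ≤ (2πa)² + C'ρ² for a constant C' = C'(a,b). -/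
open Real Set

/-- The standard `(a,b)`-torus curve on the torus with core radius `1` and tube radius `ρ`. -/
noncomputable def torusCurve (a b : ℤ) (ρ : ℝ) (t : ℝ) : EuclideanSpace ℝ (Fin 3) :=
  (WithLp.equiv 2 (Fin 3 → ℝ)).symm
    ![(1 + ρ * Real.cos (b * t)) * Real.cos (a * t),
      (1 + ρ * Real.cos (b * t)) * Real.sin (a * t),
      ρ * Real.sin (b * t)]

/-- Cross product on `ℝ³` (as `EuclideanSpace ℝ (Fin 3)`). -/
noncomputable def cross3 (u v : EuclideanSpace ℝ (Fin 3)) : EuclideanSpace ℝ (Fin 3) :=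
  (WithLp.equiv 2 (Fin 3 → ℝ)).symm
    (crossProduct ((WithLp.equiv 2 (Fin 3 → ℝ)) u) ((WithLp.equiv 2 (Fin 3 → ℝ)) v))

/-- Length of a closed curve parametrized over `[0, 2π]`. -/
noncomputable def curveLength (γ : ℝ → EuclideanSpace ℝ (Fin 3)) : ℝ :=
  ∫ t in (0:ℝ)..(2*π), ‖deriv γ t‖

/-- Bending energy `∫ κ² ds = ∫₀^{2π} |γ'' ∧ γ'|²/|γ'|⁵ dt` of a closed curve over `[0, 2π]`. -/
noncomputable def bendingEnergy (γ : ℝ → EuclideanSpace ℝ (Fin 3)) : ℝ :=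
  ∫ t in (0:ℝ)..(2*π), ‖cross3 (deriv (deriv γ) t) (deriv γ t)‖^2 / ‖deriv γ t‖^5


set_option linter.unusedVariables false
set_option maxHeartbeats 2000000

noncomputable abbrev toE (v : Fin 3 → ℝ) : EuclideanSpace ℝ (Fin 3) :=
  (WithLp.equiv 2 (Fin 3 → ℝ)).symm v

lemma hasDerivAt_toE (f : ℝ → Fin 3 → ℝ) (f' : Fin 3 → ℝ) (t : ℝ)
    (h : ∀ i, HasDerivAt (fun u => f u i) (f' i) t) :
    HasDerivAt (fun u => toE (f u)) (toE f') t := by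
  have hF : HasDerivAt f f' t := hasDerivAt_pi.2 h
  exact ((PiLp.continuousLinearEquiv 2 ℝ (fun _ : Fin 3 => ℝ)).symm.toContinuousLinearMap.hasFDerivAt).comp_hasDerivAt t hF

lemma hmul (B t : ℝ) : HasDerivAt (fun u : ℝ => B * u) B t := by
  simpa using (hasDerivAt_id t).const_mul B

lemma hcosBt (B t : ℝ) : HasDerivAt (fun u : ℝ => Real.cos (B*u)) (-(B * Real.sin (B*t))) t := by
  simpa [mul_comm] using (hmul B t).cos

lemma hsinBt (B t : ℝ) : HasDerivAt (fun u : ℝ => Real.sin (B*u)) (B * Real.cos (B*t)) t := by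
  simpa [mul_comm] using (hmul B t).sin

lemma hrad (B ρ t : ℝ) : HasDerivAt (fun u : ℝ => 1 + ρ * Real.cos (B*u)) (-(ρ*B*Real.sin (B*t))) t := by
  have := ((hcosBt B t).const_mul ρ).const_add 1
  refine (this).congr_deriv ?_
  ring

noncomputable def F0 (A B ρ : ℝ) (t : ℝ) : Fin 3 → ℝ :=
  ![(1 + ρ * Real.cos (B * t)) * Real.cos (A * t),
    (1 + ρ * Real.cos (B * t)) * Real.sin (A * t),
    ρ * Real.sin (B * t)]

noncomputable def F1 (A B ρ : ℝ) (t : ℝ) : Fin 3 → ℝ :=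
  ![-(ρ*B*Real.sin (B*t))*Real.cos (A*t) - A*(1+ρ*Real.cos (B*t))*Real.sin (A*t),
    -(ρ*B*Real.sin (B*t))*Real.sin (A*t) + A*(1+ρ*Real.cos (B*t))*Real.cos (A*t),
    ρ*B*Real.cos (B*t)]

noncomputable def F2 (A B ρ : ℝ) (t : ℝ) : Fin 3 → ℝ :=
  ![-(ρ*B^2*Real.cos (B*t))*Real.cos (A*t) + 2*A*(ρ*B*Real.sin (B*t))*Real.sin (A*t) - A^2*(1+ρ*Real.cos (B*t))*Real.cos (A*t),
    -(ρ*B^2*Real.cos (B*t))*Real.sin (A*t) - 2*A*(ρ*B*Real.sin (B*t))*Real.cos (A*t) - A^2*(1+ρ*Real.cos (B*t))*Real.sin (A*t),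
    -(ρ*B^2*Real.sin (B*t))]

lemma hasDeriv_F0 (A B ρ t : ℝ) :
    HasDerivAt (fun u => toE (F0 A B ρ u)) (toE (F1 A B ρ t)) t := by
  apply hasDerivAt_toE
  intro i
  fin_cases i
  · show HasDerivAt (fun u => (1 + ρ * Real.cos (B*u)) * Real.cos (A*u))
      (-(ρ*B*Real.sin (B*t))*Real.cos (A*t) - A*(1+ρ*Real.cos (B*t))*Real.sin (A*t)) t
    refine ((hrad B ρ t).mul (hcosBt A t)).congr_deriv ?_
    ring
  · show HasDerivAt (fun u => (1 + ρ * Real.cos (B*u)) * Real.sin (A*u))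
      (-(ρ*B*Real.sin (B*t))*Real.sin (A*t) + A*(1+ρ*Real.cos (B*t))*Real.cos (A*t)) t
    refine ((hrad B ρ t).mul (hsinBt A t)).congr_deriv ?_
    ring
  · show HasDerivAt (fun u => ρ * Real.sin (B*u)) (ρ*B*Real.cos (B*t)) t
    refine ((hsinBt B t).const_mul ρ).congr_deriv ?_
    ring

lemma hasDeriv_F1 (A B ρ t : ℝ) :
    HasDerivAt (fun u => toE (F1 A B ρ u)) (toE (F2 A B ρ t)) t := by
  apply hasDerivAt_toE
  intro i
  fin_cases i
  · show HasDerivAt (fun u => -(ρ*B*Real.sin (B*u))*Real.cos (A*u) - A*(1+ρ*Real.cos (B*u))*Real.sin (A*u))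
      (-(ρ*B^2*Real.cos (B*t))*Real.cos (A*t) + 2*A*(ρ*B*Real.sin (B*t))*Real.sin (A*t) - A^2*(1+ρ*Real.cos (B*t))*Real.cos (A*t)) t
    have h1 := ((((hsinBt B t).const_mul (ρ*B)).neg).mul (hcosBt A t))
    have h2 := (((hrad B ρ t).const_mul A).mul (hsinBt A t))
    refine (h1.sub h2).congr_deriv ?_
    simp only [Pi.neg_apply]
    ring
  · show HasDerivAt (fun u => -(ρ*B*Real.sin (B*u))*Real.sin (A*u) + A*(1+ρ*Real.cos (B*u))*Real.cos (A*u))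
      (-(ρ*B^2*Real.cos (B*t))*Real.sin (A*t) - 2*A*(ρ*B*Real.sin (B*t))*Real.cos (A*t) - A^2*(1+ρ*Real.cos (B*t))*Real.sin (A*t)) t
    have h1 := ((((hsinBt B t).const_mul (ρ*B)).neg).mul (hsinBt A t))
    have h2 := (((hrad B ρ t).const_mul A).mul (hcosBt A t))
    refine (h1.add h2).congr_deriv ?_
    simp only [Pi.neg_apply]
    ring
  · show HasDerivAt (fun u => ρ*B*Real.cos (B*u)) (-(ρ*B^2*Real.sin (B*t))) t
    refine ((hcosBt B t).const_mul (ρ*B)).congr_deriv ?_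
    ring

noncomputable def Qp (A B ρ c : ℝ) : ℝ := A^2*(1+ρ*c)^2 + ρ^2*B^2

noncomputable def Np (A B ρ c : ℝ) : ℝ := B^6*ρ^4 + A^2*B^4*ρ^2 + 4*A^2*B^4*ρ^3*c + 4*A^2*B^4*ρ^4 - A^2*B^4*ρ^4*c^2 + 2*A^4*B^2*ρ*c + 4*A^4*B^2*ρ^2 + 3*A^4*B^2*ρ^2*c^2 + 8*A^4*B^2*ρ^3*c + 4*A^4*B^2*ρ^4*c^2 - A^4*B^2*ρ^4*c^4 + A^6 + 4*A^6*ρ*c + 6*A^6*ρ^2*c^2 + 4*A^6*ρ^3*c^3 + A^6*ρ^4*c^4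

lemma norm_F1 (A B ρ t : ℝ) :
    ‖toE (F1 A B ρ t)‖ = Real.sqrt (Qp A B ρ (Real.cos (B*t))) := by
  rw [EuclideanSpace.norm_eq]
  congr 1
  simp only [toE, WithLp.equiv_symm_apply, PiLp.toLp_apply, F1, Fin.sum_univ_three, Matrix.cons_val_zero,
    Matrix.cons_val_one, Matrix.head_cons, Matrix.cons_val_two, Matrix.tail_cons,
    Real.norm_eq_abs, sq_abs, Qp]
  linear_combination (B^2*ρ^2*(Real.sin (B*t))^2 + A^2 + 2*A^2*ρ*(Real.cos (B*t)) + A^2*ρ^2*(Real.cos (B*t))^2) * (Real.cos_sq_add_sin_sq (A*t))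
    + (B^2*ρ^2) * (Real.cos_sq_add_sin_sq (B*t))

lemma cross_norm_sq (A B ρ t : ℝ) :
    ‖cross3 (toE (F2 A B ρ t)) (toE (F1 A B ρ t))‖^2 = Np A B ρ (Real.cos (B*t)) := by
  have h : ∀ v : EuclideanSpace ℝ (Fin 3), ‖v‖^2 = v 0^2 + v 1^2 + v 2^2 := by
    intro v
    rw [EuclideanSpace.norm_eq, Real.sq_sqrt (by positivity)]
    simp [Fin.sum_univ_three, sq_abs]
  rw [h]
  simp only [cross3, toE, WithLp.equiv_symm_apply, PiLp.toLp_apply, WithLp.equiv_apply, WithLp.ofLp_toLp, Equiv.apply_symm_apply, cross_apply, F1, F2,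
    Matrix.cons_val_zero, Matrix.cons_val_one, Matrix.head_cons, Matrix.cons_val_two,
    Matrix.tail_cons, Np]
  linear_combination (B^6*ρ^4*(Real.sin (B*t))^4 + 2*B^6*ρ^4*(Real.cos (B*t))^2*(Real.sin (B*t))^2 + B^6*ρ^4*(Real.cos (B*t))^4 + A^2*B^4*ρ^2*(Real.sin (B*t))^2 + A^2*B^4*ρ^2*(Real.cos (B*t))^2 + A^2*B^4*ρ^2*(Real.cos (B*t))^2*(Real.sin (A*t))^2 + A^2*B^4*ρ^2*(Real.cos (B*t))^2*(Real.cos (A*t))^2 + 4*A^2*B^4*ρ^3*(Real.cos (B*t))*(Real.sin (B*t))^2 + 4*A^2*B^4*ρ^3*(Real.cos (B*t))*(Real.sin (B*t))^2*(Real.sin (A*t))^2 + 4*A^2*B^4*ρ^3*(Real.cos (B*t))*(Real.sin (B*t))^2*(Real.cos (A*t))^2 + 4*A^2*B^4*ρ^3*(Real.cos (B*t))^3 + 2*A^2*B^4*ρ^3*(Real.cos (B*t))^3*(Real.sin (A*t))^2 + 2*A^2*B^4*ρ^3*(Real.cos (B*t))^3*(Real.cos (A*t))^2 + 4*A^2*B^4*ρ^4*(Real.sin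 (B*t))^4 + 4*A^2*B^4*ρ^4*(Real.sin (B*t))^4*(Real.sin (A*t))^2 + 4*A^2*B^4*ρ^4*(Real.sin (B*t))^4*(Real.cos (A*t))^2 + 7*A^2*B^4*ρ^4*(Real.cos (B*t))^2*(Real.sin (B*t))^2 + 4*A^2*B^4*ρ^4*(Real.cos (B*t))^2*(Real.sin (B*t))^2*(Real.sin (A*t))^2 + 4*A^2*B^4*ρ^4*(Real.cos (B*t))^2*(Real.sin (B*t))^2*(Real.cos (A*t))^2 + 3*A^2*B^4*ρ^4*(Real.cos (B*t))^4 + A^2*B^4*ρ^4*(Real.cos (B*t))^4*(Real.sin (A*t))^2 + A^2*B^4*ρ^4*(Real.cos (B*t))^4*(Real.cos (A*t))^2 + 2*A^4*B^2*ρ*(Real.cos (B*t)) + 2*A^4*B^2*ρ*(Real.cos (B*t))*(Real.sin (A*t))^2 + 2*A^4*B^2*ρ*(Real.cos (B*t))*(Real.cos (A*t))^2 + 4*A^4*B^2*ρ^2*(Real.sin (B*t))^2 + 4*A^4*B^2*ρ^2*(Real.sin (B*t))^2*(Real.sin (A*t))^2 + 4*A^4*B^2*ρ^2*(Real.sin (B*t))^2*(Real.cos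 (A*t))^2 + 7*A^4*B^2*ρ^2*(Real.cos (B*t))^2 + 6*A^4*B^2*ρ^2*(Real.cos (B*t))^2*(Real.sin (A*t))^2 + 6*A^4*B^2*ρ^2*(Real.cos (B*t))^2*(Real.cos (A*t))^2 + 8*A^4*B^2*ρ^3*(Real.cos (B*t))*(Real.sin (B*t))^2 + 8*A^4*B^2*ρ^3*(Real.cos (B*t))*(Real.sin (B*t))^2*(Real.sin (A*t))^2 + 8*A^4*B^2*ρ^3*(Real.cos (B*t))*(Real.sin (B*t))^2*(Real.cos (A*t))^2 + 8*A^4*B^2*ρ^3*(Real.cos (B*t))^3 + 6*A^4*B^2*ρ^3*(Real.cos (B*t))^3*(Real.sin (A*t))^2 + 6*A^4*B^2*ρ^3*(Real.cos (B*t))^3*(Real.cos (A*t))^2 + 4*A^4*B^2*ρ^4*(Real.cos (B*t))^2*(Real.sin (B*t))^2 + 4*A^4*B^2*ρ^4*(Real.cos (B*t))^2*(Real.sin (B*t))^2*(Real.sin (A*t))^2 + 4*A^4*B^2*ρ^4*(Real.cos (B*t))^2*(Real.sin (B*t))^2*(Real.cos (A*t))^2 + 3*A^4*B^2*ρ^4*(Real.cos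 (B*t))^4 + 2*A^4*B^2*ρ^4*(Real.cos (B*t))^4*(Real.sin (A*t))^2 + 2*A^4*B^2*ρ^4*(Real.cos (B*t))^4*(Real.cos (A*t))^2 + A^6 + A^6*(Real.sin (A*t))^2 + A^6*(Real.cos (A*t))^2 + 4*A^6*ρ*(Real.cos (B*t)) + 4*A^6*ρ*(Real.cos (B*t))*(Real.sin (A*t))^2 + 4*A^6*ρ*(Real.cos (B*t))*(Real.cos (A*t))^2 + 6*A^6*ρ^2*(Real.cos (B*t))^2 + 6*A^6*ρ^2*(Real.cos (B*t))^2*(Real.sin (A*t))^2 + 6*A^6*ρ^2*(Real.cos (B*t))^2*(Real.cos (A*t))^2 + 4*A^6*ρ^3*(Real.cos (B*t))^3 + 4*A^6*ρ^3*(Real.cos (B*t))^3*(Real.sin (A*t))^2 + 4*A^6*ρ^3*(Real.cos (B*t))^3*(Real.cos (A*t))^2 + A^6*ρ^4*(Real.cos (B*t))^4 + A^6*ρ^4*(Real.cos (B*t))^4*(Real.sin (A*t))^2 + A^6*ρ^4*(Real.cos (B*t))^4*(Real.cos (A*t))^2) * (Real.cos_sq_add_sin_sq (A*t))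
    + (B^6*ρ^4 + B^6*ρ^4*(Real.sin (B*t))^2 + B^6*ρ^4*(Real.cos (B*t))^2 + A^2*B^4*ρ^2 + 4*A^2*B^4*ρ^3*(Real.cos (B*t)) + 4*A^2*B^4*ρ^4 + 4*A^2*B^4*ρ^4*(Real.sin (B*t))^2 + 3*A^2*B^4*ρ^4*(Real.cos (B*t))^2 + 4*A^4*B^2*ρ^2 + 8*A^4*B^2*ρ^3*(Real.cos (B*t)) + 4*A^4*B^2*ρ^4*(Real.cos (B*t))^2) * (Real.cos_sq_add_sin_sq (B*t))

lemma term_bound (A B ρ c : ℝ) (hA : 0 ≤ A) (hB : 0 ≤ B) (hρ : |ρ| ≤ 1) (hc : |c| ≤ 1)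
    (k K : ℝ) (hk : |k| ≤ K) (i j p q : ℕ) :
    k * (A^i*B^j*(ρ^p*c^q)) ≤ K * (A^i*B^j) := by
  have h1 : |ρ^p*c^q| ≤ 1 := by
    rw [abs_mul, abs_pow, abs_pow]
    exact mul_le_one₀ (pow_le_one₀ (abs_nonneg _) hρ) (by positivity) (pow_le_one₀ (abs_nonneg _) hc)
  calc k*(A^i*B^j*(ρ^p*c^q)) ≤ |k*(A^i*B^j*(ρ^p*c^q))| := le_abs_self _
    _ = |k| * (A^i*B^j* |ρ^p*c^q| ) := by
        rw [abs_mul, abs_mul, abs_of_nonneg (by positivity : (0:ℝ) ≤ A^i*B^j)]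
    _ ≤ |k| * (A^i*B^j*1) := by gcongr
    _ ≤ K*(A^i*B^j) := by rw [mul_one]; exact mul_le_mul_of_nonneg_right hk (by positivity)

lemma R_bound (A B ρ c : ℝ) (hA : 0 ≤ A) (hB : 0 ≤ B) (hρ : |ρ| ≤ 1) (hc : |c| ≤ 1) :
    -(2*B^8*ρ^5*c - A^2*B^6*ρ^2 + 5*A^2*B^6*ρ^3*c + A^2*B^6*ρ^4 + 12*A^2*B^6*ρ^4*c^2 - A^2*B^6*ρ^5*c + 6*A^2*B^6*ρ^5*c^3 - A^4*B^4 + A^4*B^4*ρ*c - A^4*B^4*ρ^2 + 21*A^4*B^4*ρ^2*c^2 - A^4*B^4*ρ^3*c + 37*A^4*B^4*ρ^3*c^3 - 3*A^4*B^4*ρ^4*c^2 + 24*A^4*B^4*ρ^4*c^4 - 3*A^4*B^4*ρ^5*c^3 + 6*A^4*B^4*ρ^5*c^5 - A^6*B^2 + 7*A^6*B^2*c^2 - 3*A^6*B^2*ρ*c + 27*A^6*B^2*ρ*c^3 - 6*A^6*B^2*ρ^2*c^2 + 41*A^6*B^2*ρ^2*c^4 - 10*A^6*B^2*ρ^3*c^3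 + 31*A^6*B^2*ρ^3*c^5 - 9*A^6*B^2*ρ^4*c^4 + 12*A^6*B^2*ρ^4*c^6 - 3*A^6*B^2*ρ^5*c^5 + 2*A^6*B^2*ρ^5*c^7 - A^8*c^2 - 5*A^8*ρ*c^3 - 10*A^8*ρ^2*c^4 - 10*A^8*ρ^3*c^5 - 5*A^8*ρ^4*c^6 - A^8*ρ^5*c^7) ≤ 2*B^8 + 26*A^2*B^6 + 98*A^4*B^4 + 152*A^6*B^2 + 32*A^8 := by
  have h0 : (-2:ℝ) * (A^0*B^8*(ρ^5*c^1)) ≤ (2:ℝ) * (A^0*B^8) :=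
    term_bound A B ρ c hA hB hρ hc _ _ (by norm_num) 0 8 5 1
  have h1 : (1:ℝ) * (A^2*B^6*(ρ^2*c^0)) ≤ (1:ℝ) * (A^2*B^6) :=
    term_bound A B ρ c hA hB hρ hc _ _ (by norm_num) 2 6 2 0
  have h2 : (-5:ℝ) * (A^2*B^6*(ρ^3*c^1)) ≤ (5:ℝ) * (A^2*B^6) :=
    term_bound A B ρ c hA hB hρ hc _ _ (by norm_num) 2 6 3 1
  have h3 : (-1:ℝ) * (A^2*B^6*(ρ^4*c^0)) ≤ (1:ℝ) * (A^2*B^6) :=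
    term_bound A B ρ c hA hB hρ hc _ _ (by norm_num) 2 6 4 0
  have h4 : (-12:ℝ) * (A^2*B^6*(ρ^4*c^2)) ≤ (12:ℝ) * (A^2*B^6) :=
    term_bound A B ρ c hA hB hρ hc _ _ (by norm_num) 2 6 4 2
  have h5 : (1:ℝ) * (A^2*B^6*(ρ^5*c^1)) ≤ (1:ℝ) * (A^2*B^6) :=
    term_bound A B ρ c hA hB hρ hc _ _ (by norm_num) 2 6 5 1
  have h6 : (-6:ℝ) * (A^2*B^6*(ρ^5*c^3)) ≤ (6:ℝ) * (A^2*B^6) :=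
    term_bound A B ρ c hA hB hρ hc _ _ (by norm_num) 2 6 5 3
  have h7 : (1:ℝ) * (A^4*B^4*(ρ^0*c^0)) ≤ (1:ℝ) * (A^4*B^4) :=
    term_bound A B ρ c hA hB hρ hc _ _ (by norm_num) 4 4 0 0
  have h8 : (-1:ℝ) * (A^4*B^4*(ρ^1*c^1)) ≤ (1:ℝ) * (A^4*B^4) :=
    term_bound A B ρ c hA hB hρ hc _ _ (by norm_num) 4 4 1 1
  have h9 : (1:ℝ) * (A^4*B^4*(ρ^2*c^0)) ≤ (1:ℝ) * (A^4*B^4) :=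
    term_bound A B ρ c hA hB hρ hc _ _ (by norm_num) 4 4 2 0
  have h10 : (-21:ℝ) * (A^4*B^4*(ρ^2*c^2)) ≤ (21:ℝ) * (A^4*B^4) :=
    term_bound A B ρ c hA hB hρ hc _ _ (by norm_num) 4 4 2 2
  have h11 : (1:ℝ) * (A^4*B^4*(ρ^3*c^1)) ≤ (1:ℝ) * (A^4*B^4) :=
    term_bound A B ρ c hA hB hρ hc _ _ (by norm_num) 4 4 3 1
  have h12 : (-37:ℝ) * (A^4*B^4*(ρ^3*c^3)) ≤ (37:ℝ) * (A^4*B^4) :=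
    term_bound A B ρ c hA hB hρ hc _ _ (by norm_num) 4 4 3 3
  have h13 : (3:ℝ) * (A^4*B^4*(ρ^4*c^2)) ≤ (3:ℝ) * (A^4*B^4) :=
    term_bound A B ρ c hA hB hρ hc _ _ (by norm_num) 4 4 4 2
  have h14 : (-24:ℝ) * (A^4*B^4*(ρ^4*c^4)) ≤ (24:ℝ) * (A^4*B^4) :=
    term_bound A B ρ c hA hB hρ hc _ _ (by norm_num) 4 4 4 4
  have h15 : (3:ℝ) * (A^4*B^4*(ρ^5*c^3)) ≤ (3:ℝ) * (A^4*B^4) :=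
    term_bound A B ρ c hA hB hρ hc _ _ (by norm_num) 4 4 5 3
  have h16 : (-6:ℝ) * (A^4*B^4*(ρ^5*c^5)) ≤ (6:ℝ) * (A^4*B^4) :=
    term_bound A B ρ c hA hB hρ hc _ _ (by norm_num) 4 4 5 5
  have h17 : (1:ℝ) * (A^6*B^2*(ρ^0*c^0)) ≤ (1:ℝ) * (A^6*B^2) :=
    term_bound A B ρ c hA hB hρ hc _ _ (by norm_num) 6 2 0 0
  have h18 : (-7:ℝ) * (A^6*B^2*(ρ^0*c^2)) ≤ (7:ℝ) * (A^6*B^2) :=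
    term_bound A B ρ c hA hB hρ hc _ _ (by norm_num) 6 2 0 2
  have h19 : (3:ℝ) * (A^6*B^2*(ρ^1*c^1)) ≤ (3:ℝ) * (A^6*B^2) :=
    term_bound A B ρ c hA hB hρ hc _ _ (by norm_num) 6 2 1 1
  have h20 : (-27:ℝ) * (A^6*B^2*(ρ^1*c^3)) ≤ (27:ℝ) * (A^6*B^2) :=
    term_bound A B ρ c hA hB hρ hc _ _ (by norm_num) 6 2 1 3
  have h21 : (6:ℝ) * (A^6*B^2*(ρ^2*c^2)) ≤ (6:ℝ) * (A^6*B^2) :=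
    term_bound A B ρ c hA hB hρ hc _ _ (by norm_num) 6 2 2 2
  have h22 : (-41:ℝ) * (A^6*B^2*(ρ^2*c^4)) ≤ (41:ℝ) * (A^6*B^2) :=
    term_bound A B ρ c hA hB hρ hc _ _ (by norm_num) 6 2 2 4
  have h23 : (10:ℝ) * (A^6*B^2*(ρ^3*c^3)) ≤ (10:ℝ) * (A^6*B^2) :=
    term_bound A B ρ c hA hB hρ hc _ _ (by norm_num) 6 2 3 3
  have h24 : (-31:ℝ) * (A^6*B^2*(ρ^3*c^5)) ≤ (31:ℝ) * (A^6*B^2) :=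
    term_bound A B ρ c hA hB hρ hc _ _ (by norm_num) 6 2 3 5
  have h25 : (9:ℝ) * (A^6*B^2*(ρ^4*c^4)) ≤ (9:ℝ) * (A^6*B^2) :=
    term_bound A B ρ c hA hB hρ hc _ _ (by norm_num) 6 2 4 4
  have h26 : (-12:ℝ) * (A^6*B^2*(ρ^4*c^6)) ≤ (12:ℝ) * (A^6*B^2) :=
    term_bound A B ρ c hA hB hρ hc _ _ (by norm_num) 6 2 4 6
  have h27 : (3:ℝ) * (A^6*B^2*(ρ^5*c^5)) ≤ (3:ℝ) * (A^6*B^2) :=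
    term_bound A B ρ c hA hB hρ hc _ _ (by norm_num) 6 2 5 5
  have h28 : (-2:ℝ) * (A^6*B^2*(ρ^5*c^7)) ≤ (2:ℝ) * (A^6*B^2) :=
    term_bound A B ρ c hA hB hρ hc _ _ (by norm_num) 6 2 5 7
  have h29 : (1:ℝ) * (A^8*B^0*(ρ^0*c^2)) ≤ (1:ℝ) * (A^8*B^0) :=
    term_bound A B ρ c hA hB hρ hc _ _ (by norm_num) 8 0 0 2
  have h30 : (5:ℝ) * (A^8*B^0*(ρ^1*c^3)) ≤ (5:ℝ) * (A^8*B^0) :=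
    term_bound A B ρ c hA hB hρ hc _ _ (by norm_num) 8 0 1 3
  have h31 : (10:ℝ) * (A^8*B^0*(ρ^2*c^4)) ≤ (10:ℝ) * (A^8*B^0) :=
    term_bound A B ρ c hA hB hρ hc _ _ (by norm_num) 8 0 2 4
  have h32 : (10:ℝ) * (A^8*B^0*(ρ^3*c^5)) ≤ (10:ℝ) * (A^8*B^0) :=
    term_bound A B ρ c hA hB hρ hc _ _ (by norm_num) 8 0 3 5
  have h33 : (5:ℝ) * (A^8*B^0*(ρ^4*c^6)) ≤ (5:ℝ) * (A^8*B^0) :=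
    term_bound A B ρ c hA hB hρ hc _ _ (by norm_num) 8 0 4 6
  have h34 : (1:ℝ) * (A^8*B^0*(ρ^5*c^7)) ≤ (1:ℝ) * (A^8*B^0) :=
    term_bound A B ρ c hA hB hρ hc _ _ (by norm_num) 8 0 5 7
  linarith [h0, h1, h2, h3, h4, h5, h6, h7, h8, h9, h10, h11, h12, h13, h14, h15, h16, h17, h18, h19, h20, h21, h22, h23, h24, h25, h26, h27, h28, h29, h30, h31, h32, h33, h34]

lemma N_bound (A B ρ c : ℝ) (hA : 0 ≤ A) (hB : 0 ≤ B) (hρ : |ρ| ≤ 1) (hc : |c| ≤ 1) :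
    (B^6*ρ^4 + A^2*B^4*ρ^2 + 4*A^2*B^4*ρ^3*c + 4*A^2*B^4*ρ^4 - A^2*B^4*ρ^4*c^2 + 2*A^4*B^2*ρ*c + 4*A^4*B^2*ρ^2 + 3*A^4*B^2*ρ^2*c^2 + 8*A^4*B^2*ρ^3*c + 4*A^4*B^2*ρ^4*c^2 - A^4*B^2*ρ^4*c^4 + A^6 + 4*A^6*ρ*c + 6*A^6*ρ^2*c^2 + 4*A^6*ρ^3*c^3 + A^6*ρ^4*c^4) ≤ B^6 + 10*A^2*B^4 + 22*A^4*B^2 + 16*A^6 := by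
  have h0 : (1:ℝ) * (A^0*B^6*(ρ^4*c^0)) ≤ (1:ℝ) * (A^0*B^6) :=
    term_bound A B ρ c hA hB hρ hc _ _ (by norm_num) 0 6 4 0
  have h1 : (1:ℝ) * (A^2*B^4*(ρ^2*c^0)) ≤ (1:ℝ) * (A^2*B^4) :=
    term_bound A B ρ c hA hB hρ hc _ _ (by norm_num) 2 4 2 0
  have h2 : (4:ℝ) * (A^2*B^4*(ρ^3*c^1)) ≤ (4:ℝ) * (A^2*B^4) :=
    term_bound A B ρ c hA hB hρ hc _ _ (by norm_num) 2 4 3 1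
  have h3 : (4:ℝ) * (A^2*B^4*(ρ^4*c^0)) ≤ (4:ℝ) * (A^2*B^4) :=
    term_bound A B ρ c hA hB hρ hc _ _ (by norm_num) 2 4 4 0
  have h4 : (-1:ℝ) * (A^2*B^4*(ρ^4*c^2)) ≤ (1:ℝ) * (A^2*B^4) :=
    term_bound A B ρ c hA hB hρ hc _ _ (by norm_num) 2 4 4 2
  have h5 : (2:ℝ) * (A^4*B^2*(ρ^1*c^1)) ≤ (2:ℝ) * (A^4*B^2) :=
    term_bound A B ρ c hA hB hρ hc _ _ (by norm_num) 4 2 1 1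
  have h6 : (4:ℝ) * (A^4*B^2*(ρ^2*c^0)) ≤ (4:ℝ) * (A^4*B^2) :=
    term_bound A B ρ c hA hB hρ hc _ _ (by norm_num) 4 2 2 0
  have h7 : (3:ℝ) * (A^4*B^2*(ρ^2*c^2)) ≤ (3:ℝ) * (A^4*B^2) :=
    term_bound A B ρ c hA hB hρ hc _ _ (by norm_num) 4 2 2 2
  have h8 : (8:ℝ) * (A^4*B^2*(ρ^3*c^1)) ≤ (8:ℝ) * (A^4*B^2) :=
    term_bound A B ρ c hA hB hρ hc _ _ (by norm_num) 4 2 3 1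
  have h9 : (4:ℝ) * (A^4*B^2*(ρ^4*c^2)) ≤ (4:ℝ) * (A^4*B^2) :=
    term_bound A B ρ c hA hB hρ hc _ _ (by norm_num) 4 2 4 2
  have h10 : (-1:ℝ) * (A^4*B^2*(ρ^4*c^4)) ≤ (1:ℝ) * (A^4*B^2) :=
    term_bound A B ρ c hA hB hρ hc _ _ (by norm_num) 4 2 4 4
  have h11 : (1:ℝ) * (A^6*B^0*(ρ^0*c^0)) ≤ (1:ℝ) * (A^6*B^0) :=
    term_bound A B ρ c hA hB hρ hc _ _ (by norm_num) 6 0 0 0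
  have h12 : (4:ℝ) * (A^6*B^0*(ρ^1*c^1)) ≤ (4:ℝ) * (A^6*B^0) :=
    term_bound A B ρ c hA hB hρ hc _ _ (by norm_num) 6 0 1 1
  have h13 : (6:ℝ) * (A^6*B^0*(ρ^2*c^2)) ≤ (6:ℝ) * (A^6*B^0) :=
    term_bound A B ρ c hA hB hρ hc _ _ (by norm_num) 6 0 2 2
  have h14 : (4:ℝ) * (A^6*B^0*(ρ^3*c^3)) ≤ (4:ℝ) * (A^6*B^0) :=
    term_bound A B ρ c hA hB hρ hc _ _ (by norm_num) 6 0 3 3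
  have h15 : (1:ℝ) * (A^6*B^0*(ρ^4*c^4)) ≤ (1:ℝ) * (A^6*B^0) :=
    term_bound A B ρ c hA hB hρ hc _ _ (by norm_num) 6 0 4 4
  linarith [h0, h1, h2, h3, h4, h5, h6, h7, h8, h9, h10, h11, h12, h13, h14, h15]

noncomputable def Rp (A B ρ c : ℝ) : ℝ := 2*B^8*ρ^5*c - A^2*B^6*ρ^2 + 5*A^2*B^6*ρ^3*c + A^2*B^6*ρ^4 + 12*A^2*B^6*ρ^4*c^2 - A^2*B^6*ρ^5*c + 6*A^2*B^6*ρ^5*c^3 - A^4*B^4 + A^4*B^4*ρ*c - A^4*B^4*ρ^2 + 21*A^4*B^4*ρ^2*c^2 - A^4*B^4*ρ^3*c + 37*A^4*B^4*ρ^3*c^3 - 3*A^4*B^4*ρ^4*c^2 + 24*A^4*B^4*ρ^4*c^4 - 3*A^4*B^4*ρ^5*c^3 + 6*A^4*B^4*ρ^5*c^5 - A^6*B^2 + 7*A^6*B^2*c^2 - 3*A^6*B^2*ρ*c + 27*A^6*B^2*ρ*c^3 - 6*A^6*B^2*ρ^2*c^2 + 41*A^6*B^2*ρ^2*c^4 -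 10*A^6*B^2*ρ^3*c^3 + 31*A^6*B^2*ρ^3*c^5 - 9*A^6*B^2*ρ^4*c^4 + 12*A^6*B^2*ρ^4*c^6 - 3*A^6*B^2*ρ^5*c^5 + 2*A^6*B^2*ρ^5*c^7 - A^8*c^2 - 5*A^8*ρ*c^3 - 10*A^8*ρ^2*c^4 - 10*A^8*ρ^3*c^5 - 5*A^8*ρ^4*c^6 - A^8*ρ^5*c^7
noncomputable def Mp (A B : ℝ) : ℝ := 2*B^8 + 26*A^2*B^6 + 98*A^4*B^4 + 152*A^6*B^2 + 32*A^8
noncomputable def NBp (A B : ℝ) : ℝ := B^6 + 10*A^2*B^4 + 22*A^4*B^2 + 16*A^6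

lemma R_bound' (A B ρ c : ℝ) (hA : 0 ≤ A) (hB : 0 ≤ B) (hρ : |ρ| ≤ 1) (hc : |c| ≤ 1) :
    -(Rp A B ρ c) ≤ Mp A B := by
  simp only [Rp, Mp]
  have h0 : (-2:ℝ) * (A^0*B^8*(ρ^5*c^1)) ≤ (2:ℝ) * (A^0*B^8) :=
    term_bound A B ρ c hA hB hρ hc _ _ (by norm_num) 0 8 5 1
  have h1 : (1:ℝ) * (A^2*B^6*(ρ^2*c^0)) ≤ (1:ℝ) * (A^2*B^6) :=
    term_bound A B ρ c hA hB hρ hc _ _ (by norm_num) 2 6 2 0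
  have h2 : (-5:ℝ) * (A^2*B^6*(ρ^3*c^1)) ≤ (5:ℝ) * (A^2*B^6) :=
    term_bound A B ρ c hA hB hρ hc _ _ (by norm_num) 2 6 3 1
  have h3 : (-1:ℝ) * (A^2*B^6*(ρ^4*c^0)) ≤ (1:ℝ) * (A^2*B^6) :=
    term_bound A B ρ c hA hB hρ hc _ _ (by norm_num) 2 6 4 0
  have h4 : (-12:ℝ) * (A^2*B^6*(ρ^4*c^2)) ≤ (12:ℝ) * (A^2*B^6) :=
    term_bound A B ρ c hA hB hρ hc _ _ (by norm_num) 2 6 4 2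
  have h5 : (1:ℝ) * (A^2*B^6*(ρ^5*c^1)) ≤ (1:ℝ) * (A^2*B^6) :=
    term_bound A B ρ c hA hB hρ hc _ _ (by norm_num) 2 6 5 1
  have h6 : (-6:ℝ) * (A^2*B^6*(ρ^5*c^3)) ≤ (6:ℝ) * (A^2*B^6) :=
    term_bound A B ρ c hA hB hρ hc _ _ (by norm_num) 2 6 5 3
  have h7 : (1:ℝ) * (A^4*B^4*(ρ^0*c^0)) ≤ (1:ℝ) * (A^4*B^4) :=
    term_bound A B ρ c hA hB hρ hc _ _ (by norm_num) 4 4 0 0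
  have h8 : (-1:ℝ) * (A^4*B^4*(ρ^1*c^1)) ≤ (1:ℝ) * (A^4*B^4) :=
    term_bound A B ρ c hA hB hρ hc _ _ (by norm_num) 4 4 1 1
  have h9 : (1:ℝ) * (A^4*B^4*(ρ^2*c^0)) ≤ (1:ℝ) * (A^4*B^4) :=
    term_bound A B ρ c hA hB hρ hc _ _ (by norm_num) 4 4 2 0
  have h10 : (-21:ℝ) * (A^4*B^4*(ρ^2*c^2)) ≤ (21:ℝ) * (A^4*B^4) :=
    term_bound A B ρ c hA hB hρ hc _ _ (by norm_num) 4 4 2 2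
  have h11 : (1:ℝ) * (A^4*B^4*(ρ^3*c^1)) ≤ (1:ℝ) * (A^4*B^4) :=
    term_bound A B ρ c hA hB hρ hc _ _ (by norm_num) 4 4 3 1
  have h12 : (-37:ℝ) * (A^4*B^4*(ρ^3*c^3)) ≤ (37:ℝ) * (A^4*B^4) :=
    term_bound A B ρ c hA hB hρ hc _ _ (by norm_num) 4 4 3 3
  have h13 : (3:ℝ) * (A^4*B^4*(ρ^4*c^2)) ≤ (3:ℝ) * (A^4*B^4) :=
    term_bound A B ρ c hA hB hρ hc _ _ (by norm_num) 4 4 4 2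
  have h14 : (-24:ℝ) * (A^4*B^4*(ρ^4*c^4)) ≤ (24:ℝ) * (A^4*B^4) :=
    term_bound A B ρ c hA hB hρ hc _ _ (by norm_num) 4 4 4 4
  have h15 : (3:ℝ) * (A^4*B^4*(ρ^5*c^3)) ≤ (3:ℝ) * (A^4*B^4) :=
    term_bound A B ρ c hA hB hρ hc _ _ (by norm_num) 4 4 5 3
  have h16 : (-6:ℝ) * (A^4*B^4*(ρ^5*c^5)) ≤ (6:ℝ) * (A^4*B^4) :=
    term_bound A B ρ c hA hB hρ hc _ _ (by norm_num) 4 4 5 5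
  have h17 : (1:ℝ) * (A^6*B^2*(ρ^0*c^0)) ≤ (1:ℝ) * (A^6*B^2) :=
    term_bound A B ρ c hA hB hρ hc _ _ (by norm_num) 6 2 0 0
  have h18 : (-7:ℝ) * (A^6*B^2*(ρ^0*c^2)) ≤ (7:ℝ) * (A^6*B^2) :=
    term_bound A B ρ c hA hB hρ hc _ _ (by norm_num) 6 2 0 2
  have h19 : (3:ℝ) * (A^6*B^2*(ρ^1*c^1)) ≤ (3:ℝ) * (A^6*B^2) :=
    term_bound A B ρ c hA hB hρ hc _ _ (by norm_num) 6 2 1 1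
  have h20 : (-27:ℝ) * (A^6*B^2*(ρ^1*c^3)) ≤ (27:ℝ) * (A^6*B^2) :=
    term_bound A B ρ c hA hB hρ hc _ _ (by norm_num) 6 2 1 3
  have h21 : (6:ℝ) * (A^6*B^2*(ρ^2*c^2)) ≤ (6:ℝ) * (A^6*B^2) :=
    term_bound A B ρ c hA hB hρ hc _ _ (by norm_num) 6 2 2 2
  have h22 : (-41:ℝ) * (A^6*B^2*(ρ^2*c^4)) ≤ (41:ℝ) * (A^6*B^2) :=
    term_bound A B ρ c hA hB hρ hc _ _ (by norm_num) 6 2 2 4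
  have h23 : (10:ℝ) * (A^6*B^2*(ρ^3*c^3)) ≤ (10:ℝ) * (A^6*B^2) :=
    term_bound A B ρ c hA hB hρ hc _ _ (by norm_num) 6 2 3 3
  have h24 : (-31:ℝ) * (A^6*B^2*(ρ^3*c^5)) ≤ (31:ℝ) * (A^6*B^2) :=
    term_bound A B ρ c hA hB hρ hc _ _ (by norm_num) 6 2 3 5
  have h25 : (9:ℝ) * (A^6*B^2*(ρ^4*c^4)) ≤ (9:ℝ) * (A^6*B^2) :=
    term_bound A B ρ c hA hB hρ hc _ _ (by norm_num) 6 2 4 4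
  have h26 : (-12:ℝ) * (A^6*B^2*(ρ^4*c^6)) ≤ (12:ℝ) * (A^6*B^2) :=
    term_bound A B ρ c hA hB hρ hc _ _ (by norm_num) 6 2 4 6
  have h27 : (3:ℝ) * (A^6*B^2*(ρ^5*c^5)) ≤ (3:ℝ) * (A^6*B^2) :=
    term_bound A B ρ c hA hB hρ hc _ _ (by norm_num) 6 2 5 5
  have h28 : (-2:ℝ) * (A^6*B^2*(ρ^5*c^7)) ≤ (2:ℝ) * (A^6*B^2) :=
    term_bound A B ρ c hA hB hρ hc _ _ (by norm_num) 6 2 5 7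
  have h29 : (1:ℝ) * (A^8*B^0*(ρ^0*c^2)) ≤ (1:ℝ) * (A^8*B^0) :=
    term_bound A B ρ c hA hB hρ hc _ _ (by norm_num) 8 0 0 2
  have h30 : (5:ℝ) * (A^8*B^0*(ρ^1*c^3)) ≤ (5:ℝ) * (A^8*B^0) :=
    term_bound A B ρ c hA hB hρ hc _ _ (by norm_num) 8 0 1 3
  have h31 : (10:ℝ) * (A^8*B^0*(ρ^2*c^4)) ≤ (10:ℝ) * (A^8*B^0) :=
    term_bound A B ρ c hA hB hρ hc _ _ (by norm_num) 8 0 2 4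
  have h32 : (10:ℝ) * (A^8*B^0*(ρ^3*c^5)) ≤ (10:ℝ) * (A^8*B^0) :=
    term_bound A B ρ c hA hB hρ hc _ _ (by norm_num) 8 0 3 5
  have h33 : (5:ℝ) * (A^8*B^0*(ρ^4*c^6)) ≤ (5:ℝ) * (A^8*B^0) :=
    term_bound A B ρ c hA hB hρ hc _ _ (by norm_num) 8 0 4 6
  have h34 : (1:ℝ) * (A^8*B^0*(ρ^5*c^7)) ≤ (1:ℝ) * (A^8*B^0) :=
    term_bound A B ρ c hA hB hρ hc _ _ (by norm_num) 8 0 5 7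
  linarith [h0, h1, h2, h3, h4, h5, h6, h7, h8, h9, h10, h11, h12, h13, h14, h15, h16, h17, h18, h19, h20, h21, h22, h23, h24, h25, h26, h27, h28, h29, h30, h31, h32, h33, h34]

lemma N_bound' (A B ρ c : ℝ) (hA : 0 ≤ A) (hB : 0 ≤ B) (hρ : |ρ| ≤ 1) (hc : |c| ≤ 1) :
    Np A B ρ c ≤ NBp A B := by
  simp only [Np, NBp]
  have h0 : (1:ℝ) * (A^0*B^6*(ρ^4*c^0)) ≤ (1:ℝ) * (A^0*B^6) :=
    term_bound A B ρ c hA hB hρ hc _ _ (by norm_num) 0 6 4 0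
  have h1 : (1:ℝ) * (A^2*B^4*(ρ^2*c^0)) ≤ (1:ℝ) * (A^2*B^4) :=
    term_bound A B ρ c hA hB hρ hc _ _ (by norm_num) 2 4 2 0
  have h2 : (4:ℝ) * (A^2*B^4*(ρ^3*c^1)) ≤ (4:ℝ) * (A^2*B^4) :=
    term_bound A B ρ c hA hB hρ hc _ _ (by norm_num) 2 4 3 1
  have h3 : (4:ℝ) * (A^2*B^4*(ρ^4*c^0)) ≤ (4:ℝ) * (A^2*B^4) :=
    term_bound A B ρ c hA hB hρ hc _ _ (by norm_num) 2 4 4 0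
  have h4 : (-1:ℝ) * (A^2*B^4*(ρ^4*c^2)) ≤ (1:ℝ) * (A^2*B^4) :=
    term_bound A B ρ c hA hB hρ hc _ _ (by norm_num) 2 4 4 2
  have h5 : (2:ℝ) * (A^4*B^2*(ρ^1*c^1)) ≤ (2:ℝ) * (A^4*B^2) :=
    term_bound A B ρ c hA hB hρ hc _ _ (by norm_num) 4 2 1 1
  have h6 : (4:ℝ) * (A^4*B^2*(ρ^2*c^0)) ≤ (4:ℝ) * (A^4*B^2) :=
    term_bound A B ρ c hA hB hρ hc _ _ (by norm_num) 4 2 2 0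
  have h7 : (3:ℝ) * (A^4*B^2*(ρ^2*c^2)) ≤ (3:ℝ) * (A^4*B^2) :=
    term_bound A B ρ c hA hB hρ hc _ _ (by norm_num) 4 2 2 2
  have h8 : (8:ℝ) * (A^4*B^2*(ρ^3*c^1)) ≤ (8:ℝ) * (A^4*B^2) :=
    term_bound A B ρ c hA hB hρ hc _ _ (by norm_num) 4 2 3 1
  have h9 : (4:ℝ) * (A^4*B^2*(ρ^4*c^2)) ≤ (4:ℝ) * (A^4*B^2) :=
    term_bound A B ρ c hA hB hρ hc _ _ (by norm_num) 4 2 4 2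
  have h10 : (-1:ℝ) * (A^4*B^2*(ρ^4*c^4)) ≤ (1:ℝ) * (A^4*B^2) :=
    term_bound A B ρ c hA hB hρ hc _ _ (by norm_num) 4 2 4 4
  have h11 : (1:ℝ) * (A^6*B^0*(ρ^0*c^0)) ≤ (1:ℝ) * (A^6*B^0) :=
    term_bound A B ρ c hA hB hρ hc _ _ (by norm_num) 6 0 0 0
  have h12 : (4:ℝ) * (A^6*B^0*(ρ^1*c^1)) ≤ (4:ℝ) * (A^6*B^0) :=
    term_bound A B ρ c hA hB hρ hc _ _ (by norm_num) 6 0 1 1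
  have h13 : (6:ℝ) * (A^6*B^0*(ρ^2*c^2)) ≤ (6:ℝ) * (A^6*B^0) :=
    term_bound A B ρ c hA hB hρ hc _ _ (by norm_num) 6 0 2 2
  have h14 : (4:ℝ) * (A^6*B^0*(ρ^3*c^3)) ≤ (4:ℝ) * (A^6*B^0) :=
    term_bound A B ρ c hA hB hρ hc _ _ (by norm_num) 6 0 3 3
  have h15 : (1:ℝ) * (A^6*B^0*(ρ^4*c^4)) ≤ (1:ℝ) * (A^6*B^0) :=
    term_bound A B ρ c hA hB hρ hc _ _ (by norm_num) 6 0 4 4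
  linarith [h0, h1, h2, h3, h4, h5, h6, h7, h8, h9, h10, h11, h12, h13, h14, h15]

lemma main_id (A B ρ c : ℝ) :
    A^2*(1+ρ*c)*Np A B ρ c = (A^2+ρ*(2*B^2-A^2)*c)*(Qp A B ρ c)^3 - ρ^2*Rp A B ρ c := by
  simp only [Np, Qp, Rp]; ring

lemma length_pointwise (A B ρ c : ℝ) (hA : 2 ≤ A) (hρ0 : 0 < ρ) (hρ : ρ ≤ 1/2) (hc : |c| ≤ 1) :
    A*(1+ρ*c) ≤ Real.sqrt (Qp A B ρ c) ∧ Real.sqrt (Qp A B ρ c) ≤ A*(1+ρ*c) + B^2*ρ^2 := by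
  obtain ⟨hc1, hc2⟩ := abs_le.mp hc
  have hA0 : (0:ℝ) < A := by linarith
  have hr1 : (1:ℝ)/2 ≤ 1 + ρ*c := by nlinarith
  constructor
  · calc A*(1+ρ*c) = Real.sqrt ((A*(1+ρ*c))^2) := (Real.sqrt_sq (by positivity)).symm
      _ ≤ Real.sqrt (Qp A B ρ c) := Real.sqrt_le_sqrt (by simp only [Qp]; nlinarith [sq_nonneg (ρ*B)])
  · have h2 : Qp A B ρ c ≤ (A*(1+ρ*c) + B^2*ρ^2)^2 := by
      simp only [Qp]
      nlinarith [sq_nonneg (B^2*ρ^2), sq_nonneg (ρ*B), sq_nonneg B,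
        mul_le_mul_of_nonneg_left hr1 (by positivity : (0:ℝ) ≤ 2*A*(B^2*ρ^2))]
    have h3 := Real.sqrt_le_sqrt h2
    rwa [Real.sqrt_sq (by positivity)] at h3

set_option maxHeartbeats 1000000 in
lemma energy_pointwise (A B ρ c : ℝ) (hA : 2 ≤ A) (hB : 2 ≤ B) (hρ0 : 0 < ρ) (hρ : ρ ≤ 1/2)
    (hc : |c| ≤ 1) (hN : 0 ≤ Np A B ρ c) :
    Np A B ρ c / (Real.sqrt (Qp A B ρ c))^5
      ≤ A + ρ*(2*B^2-A^2)*c/A + ((192*Mp A B + 64*B^2*NBp A B)/A^7)*ρ^2 := by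
  obtain ⟨hc1, hc2⟩ := abs_le.mp hc
  have hA0 : (0:ℝ) < A := by linarith
  have hB0 : (0:ℝ) < B := by linarith
  have hρ1 : |ρ| ≤ 1 := by rw [abs_of_pos hρ0]; linarith
  have hr1 : (1:ℝ)/2 ≤ 1 + ρ*c := by nlinarith
  have hr0 : (0:ℝ) < 1 + ρ*c := by linarith
  have hAr0 : 0 < A*(1+ρ*c) := by positivity
  have hMb := R_bound' A B ρ c hA0.le hB0.le hρ1 hc
  have hNb := N_bound' A B ρ c hA0.le hB0.le hρ1 hc
  have hId := main_id A B ρ c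
  have hM0 : 0 ≤ Mp A B := by simp only [Mp]; positivity
  have hNB0 : 0 ≤ NBp A B := by simp only [NBp]; positivity
  set N := Np A B ρ c with hNdef
  set Q := Qp A B ρ c with hQdef
  have hQ4 : A^2/4 ≤ Q := by
    have hq : (1/4:ℝ) ≤ (1+ρ*c)^2 := by nlinarith
    have hq2 := mul_le_mul_of_nonneg_left hq (sq_nonneg A)
    rw [hQdef]; simp only [Qp]; nlinarith [sq_nonneg (ρ*B)]
  have hQ0 : (0:ℝ) < Q := by nlinarith
  have hQ3 : A^6/64 ≤ Q^3 := by
    calc A^6/64 = (A^2/4)^3 := by ring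
      _ ≤ Q^3 := pow_le_pow_left₀ (by positivity) hQ4 3
  have hQ30 : (0:ℝ) < Q^3 := by positivity
  set sq := Real.sqrt Q with hsqdef
  have hsq2 : sq^2 = Q := Real.sq_sqrt hQ0.le
  have hsq0 : (0:ℝ) < sq := Real.sqrt_pos.2 hQ0
  have hub : sq ≤ A*(1+ρ*c) + ρ^2*B^2/(2*(A*(1+ρ*c))) := by
    have h2 : Q ≤ (A*(1+ρ*c) + ρ^2*B^2/(2*(A*(1+ρ*c))))^2 := by
      have e : (A*(1+ρ*c) + ρ^2*B^2/(2*(A*(1+ρ*c))))^2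
          = Q + (ρ^2*B^2/(2*(A*(1+ρ*c))))^2 := by
        rw [hQdef]; simp only [Qp]; field_simp; ring
      rw [e]; nlinarith [sq_nonneg (ρ^2*B^2/(2*(A*(1+ρ*c))))]
    calc sq ≤ Real.sqrt ((A*(1+ρ*c) + ρ^2*B^2/(2*(A*(1+ρ*c))))^2) := Real.sqrt_le_sqrt h2
      _ = _ := Real.sqrt_sq (by positivity)
  have hchain : N / sq^5 = N * sq / Q^3 := by
    rw [div_eq_div_iff (by positivity) (by positivity)]
    linear_combination (-(N*(sq^4 + sq^2*Q + Q^2))) * hsq2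
  rw [hchain, div_le_iff₀ hQ30]
  have step1 : N * sq ≤ N*(A*(1+ρ*c)) + N*(ρ^2*B^2/(2*(A*(1+ρ*c)))) := by
    calc N * sq ≤ N * (A*(1+ρ*c) + ρ^2*B^2/(2*(A*(1+ρ*c)))) := mul_le_mul_of_nonneg_left hub hN
      _ = _ := by ring
  have hx : N*(ρ^2*B^2/(2*(A*(1+ρ*c)))) ≤ ρ^2*(B^2*NBp A B)/A := by
    rw [show N*(ρ^2*B^2/(2*(A*(1+ρ*c)))) = N*ρ^2*B^2/(2*(A*(1+ρ*c))) by ring,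
      div_le_div_iff₀ (by positivity) hA0]
    have h2r : (1:ℝ) ≤ 2*(1+ρ*c) := by linarith
    have hmm : N*ρ^2*B^2*A ≤ NBp A B*ρ^2*B^2*A :=
      mul_le_mul_of_nonneg_right (mul_le_mul_of_nonneg_right
        (mul_le_mul_of_nonneg_right hNb (sq_nonneg ρ)) (by positivity)) hA0.le
    nlinarith [mul_le_mul_of_nonneg_left h2r (by positivity : (0:ℝ) ≤ ρ^2*(B^2*NBp A B)*A)]
  have hmain : N*(A*(1+ρ*c)) ≤ (A + ρ*(2*B^2-A^2)*c/A)*Q^3 + ρ^2*(Mp A B)/A := by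
    have e : ((A + ρ*(2*B^2-A^2)*c/A)*Q^3 + ρ^2*(Mp A B)/A)*A
        = (A^2+ρ*(2*B^2-A^2)*c)*Q^3 + ρ^2*(Mp A B) := by field_simp
    have h2 : N*(A*(1+ρ*c))*A ≤ ((A + ρ*(2*B^2-A^2)*c/A)*Q^3 + ρ^2*(Mp A B)/A)*A := by
      rw [e]
      have hRM : -(ρ^2*Rp A B ρ c) ≤ ρ^2*(Mp A B) := by
        nlinarith [mul_le_mul_of_nonneg_left hMb (sq_nonneg ρ)]
      nlinarith [hId, hRM]
    exact le_of_mul_le_mul_right h2 hA0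
  have hCE : ρ^2*(Mp A B)/A + ρ^2*(B^2*NBp A B)/A
      ≤ ((192*Mp A B + 64*B^2*NBp A B)/A^7)*ρ^2*Q^3 := by
    have h64 : (Mp A B + B^2*NBp A B)*A^6 ≤ (192*Mp A B + 64*B^2*NBp A B)*Q^3 := by
      have h1 : (192*Mp A B + 64*B^2*NBp A B)*(A^6/64) ≤ (192*Mp A B + 64*B^2*NBp A B)*Q^3 :=
        mul_le_mul_of_nonneg_left hQ3 (by positivity)
      nlinarith [h1, mul_nonneg hM0 (pow_nonneg hA0.le 6),
        mul_nonneg (mul_nonneg (sq_nonneg B) hNB0) (pow_nonneg hA0.le 6)]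
    have e2 : ((192*Mp A B + 64*B^2*NBp A B)/A^7)*ρ^2*Q^3
          - (ρ^2*(Mp A B)/A + ρ^2*(B^2*NBp A B)/A)
        = ρ^2*((192*Mp A B + 64*B^2*NBp A B)*Q^3 - (Mp A B + B^2*NBp A B)*A^6)/A^7 := by
      field_simp
    have h3 : 0 ≤ ((192*Mp A B + 64*B^2*NBp A B)/A^7)*ρ^2*Q^3
        - (ρ^2*(Mp A B)/A + ρ^2*(B^2*NBp A B)/A) := by
      rw [e2]; apply div_nonneg (mul_nonneg (sq_nonneg ρ) (by linarith)) (by positivity)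
    linarith
  have expand : (A + ρ*(2*B^2-A^2)*c/A + ((192*Mp A B + 64*B^2*NBp A B)/A^7)*ρ^2) * Q^3
      = (A + ρ*(2*B^2-A^2)*c/A)*Q^3 + ((192*Mp A B + 64*B^2*NBp A B)/A^7)*ρ^2*Q^3 := by ring
  rw [expand]
  linarith [step1, hx, hmain, hCE]

lemma deriv_torus (a b : ℤ) (ρ : ℝ) :
    deriv (torusCurve a b ρ) = fun t => toE (F1 (a:ℝ) (b:ℝ) ρ t) := by
  funext t
  exact ((hasDeriv_F0 (a:ℝ) (b:ℝ) ρ t).deriv : _)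

lemma deriv2_torus (a b : ℤ) (ρ : ℝ) :
    deriv (deriv (torusCurve a b ρ)) = fun t => toE (F2 (a:ℝ) (b:ℝ) ρ t) := by
  rw [deriv_torus]
  funext t
  exact ((hasDeriv_F1 (a:ℝ) (b:ℝ) ρ t).deriv : _)

lemma length_eq (a b : ℤ) (ρ : ℝ) :
    curveLength (torusCurve a b ρ)
      = ∫ t in (0:ℝ)..(2*π), Real.sqrt (Qp a b ρ (Real.cos ((b:ℝ)*t))) := by
  unfold curveLength
  rw [deriv_torus]
  simp only [norm_F1]

lemma energy_eq (a b : ℤ) (ρ : ℝ) :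
    bendingEnergy (torusCurve a b ρ)
      = ∫ t in (0:ℝ)..(2*π),
          Np a b ρ (Real.cos ((b:ℝ)*t)) / (Real.sqrt (Qp a b ρ (Real.cos ((b:ℝ)*t))))^5 := by
  unfold bendingEnergy
  rw [deriv2_torus, deriv_torus]
  simp only [cross_norm_sq, norm_F1]

lemma int_cos (b : ℤ) (hb : (b:ℝ) ≠ 0) :
    ∫ t in (0:ℝ)..(2*π), Real.cos ((b:ℝ)*t) = 0 := by
  have h : ∀ t ∈ Set.uIcc (0:ℝ) (2*π),
      HasDerivAt (fun u => Real.sin ((b:ℝ)*u)/(b:ℝ)) (Real.cos ((b:ℝ)*t)) t := by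
    intro t _
    have h2 := (hsinBt (b:ℝ) t).div_const (b:ℝ)
    refine (h2).congr_deriv ?_
    field_simp
  rw [intervalIntegral.integral_eq_sub_of_hasDerivAt h
    ((Real.continuous_cos.comp (continuous_const.mul continuous_id)).intervalIntegrable _ _)]
  have h3 : (b:ℝ)*(2*π) = ((2*b : ℤ):ℝ)*π := by push_cast; ring
  rw [h3, Real.sin_int_mul_pi]
  simp

/-- **Length and bending energy of comparison torus knots.**
For coprime `a, b ≥ 2` there are `C, C' > 0` and `ρ₀ > 0` such that for all `ρ ∈ (0, ρ₀]`:
`|𝓛(τ_ρ) − 2πa| ≤ Cρ²` and `E_bend(τ_ρ) ≤ 2πa + Cρ²`; consequently the unit-length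
arclength-parametrized rescaling `τ̃_ρ` satisfies
`E_bend(τ̃_ρ) = 𝓛(τ_ρ)·E_bend(τ_ρ) ≤ (2πa)² + C'ρ²`. -/
theorem stmt_10 (a b : ℤ) (ha : 2 ≤ a) (hb : 2 ≤ b) (hco : Int.gcd a b = 1) :
    ∃ C C' ρ₀ : ℝ, 0 < C ∧ 0 < C' ∧ 0 < ρ₀ ∧
      ∀ ρ ∈ Ioc (0:ℝ) ρ₀,
        |curveLength (torusCurve a b ρ) - 2*π*a| ≤ C * ρ^2 ∧
        bendingEnergy (torusCurve a b ρ) ≤ 2*π*a + C * ρ^2 ∧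
        curveLength (torusCurve a b ρ) * bendingEnergy (torusCurve a b ρ)
          ≤ (2*π*a)^2 + C' * ρ^2 := by
  have hA2 : (2:ℝ) ≤ (a:ℝ) := by exact_mod_cast ha
  have hB2 : (2:ℝ) ≤ (b:ℝ) := by exact_mod_cast hb
  set A := ((a:ℤ):ℝ) with hAdef
  set B := ((b:ℤ):ℝ) with hBdef
  have hA0 : (0:ℝ) < A := by linarith
  have hB0 : (0:ℝ) < B := by linarith
  have hM0 : 0 ≤ Mp A B := by simp only [Mp]; positivity
  have hNB0 : 0 ≤ NBp A B := by simp only [NBp]; positivity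
  set CE := (192*Mp A B + 64*B^2*NBp A B)/A^7 with hCEdef
  have hCE0 : 0 ≤ CE := by
    apply div_nonneg _ (by positivity)
    have h1 : 0 ≤ (192:ℝ)*Mp A B := by linarith
    have h2 : 0 ≤ 64*B^2*NBp A B := by
      apply mul_nonneg (by positivity) hNB0
    linarith
  set C := 2*π*B^2 + 2*π*CE + 1 with hCdef
  have hπ := Real.pi_pos
  have hC0 : 0 < C := by
    have h1 : 0 ≤ 2*π*B^2 := by positivity
    have h2 : 0 ≤ 2*π*CE := by
      apply mul_nonneg (by positivity) hCE0
    rw [hCdef]; linarith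
  set C' := C*(4*π*A + C) with hC'def
  have hC'0 : 0 < C' := by
    apply mul_pos hC0
    have : 0 < 4*π*A := by positivity
    linarith
  refine ⟨C, C', 1/2, hC0, hC'0, by norm_num, ?_⟩
  rintro ρ ⟨hρ0, hρhalf⟩
  -- pointwise positivity facts
  have hrpos : ∀ t : ℝ, 0 < 1 + ρ*Real.cos (B*t) := by
    intro t
    have h1 := abs_le.mp (Real.abs_cos_le_one (B*t))
    nlinarith [h1.1, h1.2]
  have hQpos : ∀ t : ℝ, 0 < Qp A B ρ (Real.cos (B*t)) := by
    intro t
    have h1 := hrpos t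
    simp only [Qp]
    nlinarith [sq_nonneg (ρ*B), mul_pos (mul_pos hA0 hA0) (mul_pos h1 h1)]
  -- continuity facts
  have hcont_c : Continuous fun t : ℝ => Real.cos (B*t) :=
    Real.continuous_cos.comp (continuous_const.mul continuous_id)
  have hcont_Q : Continuous fun t : ℝ => Qp A B ρ (Real.cos (B*t)) := by
    simp only [Qp]; fun_prop
  have hcont_sqrt : Continuous fun t : ℝ => Real.sqrt (Qp A B ρ (Real.cos (B*t))) :=
    Real.continuous_sqrt.comp hcont_Q
  have hcont_Np : Continuous fun t : ℝ => Np A B ρ (Real.cos (B*t)) := by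
    simp only [Np]; fun_prop
  have hcont_f : Continuous fun t : ℝ =>
      Np A B ρ (Real.cos (B*t)) / (Real.sqrt (Qp A B ρ (Real.cos (B*t))))^5 := by
    apply hcont_Np.div (hcont_sqrt.pow 5)
    intro t
    have : 0 < Real.sqrt (Qp A B ρ (Real.cos (B*t))) := Real.sqrt_pos.2 (hQpos t)
    exact pow_ne_zero 5 this.ne'
  have hcont_g : Continuous fun t : ℝ => A*(1+ρ*Real.cos (B*t)) := by fun_prop
  have hab : (0:ℝ) ≤ 2*π := by positivity
  -- basic integrals
  have hintcos : ∫ t in (0:ℝ)..(2*π), Real.cos (B*t) = 0 := int_cos b (by linarith)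
  have hint_g : ∫ t in (0:ℝ)..(2*π), A*(1+ρ*Real.cos (B*t)) = 2*π*A := by
    have e : Set.EqOn (fun t => A*(1+ρ*Real.cos (B*t)))
        (fun t => A + (A*ρ)*Real.cos (B*t)) (Set.uIcc (0:ℝ) (2*π)) := fun t _ => by ring
    rw [intervalIntegral.integral_congr e,
      intervalIntegral.integral_add (intervalIntegrable_const)
        ((hcont_c.intervalIntegrable _ _).const_mul _),
      intervalIntegral.integral_const, intervalIntegral.integral_const_mul, hintcos]
    first
      | (simp; ring)
      | simp
  -- length bounds
  have hptL := fun t : ℝ =>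
    length_pointwise A B ρ (Real.cos (B*t)) hA2 hρ0 hρhalf (Real.abs_cos_le_one _)
  have hL_lb : 2*π*A ≤ curveLength (torusCurve a b ρ) := by
    rw [length_eq, ← hint_g]
    exact intervalIntegral.integral_mono_on hab (hcont_g.intervalIntegrable _ _)
      (hcont_sqrt.intervalIntegrable _ _) (fun t _ => (hptL t).1)
  have hint_g2 : ∫ t in (0:ℝ)..(2*π), (A*(1+ρ*Real.cos (B*t)) + B^2*ρ^2)
      = 2*π*A + 2*π*(B^2*ρ^2) := by
    rw [intervalIntegral.integral_add (hcont_g.intervalIntegrable _ _) intervalIntegrable_const,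
      hint_g, intervalIntegral.integral_const]
    first
      | (simp; ring)
      | simp
  have hL_ub : curveLength (torusCurve a b ρ) ≤ 2*π*A + 2*π*(B^2*ρ^2) := by
    rw [length_eq, ← hint_g2]
    exact intervalIntegral.integral_mono_on hab (hcont_sqrt.intervalIntegrable _ _)
      ((hcont_g.add continuous_const).intervalIntegrable _ _) (fun t _ => (hptL t).2)
  have hρ2 : (0:ℝ) ≤ ρ^2 := sq_nonneg ρ
  have hLC : |curveLength (torusCurve a b ρ) - 2*π*A| ≤ C * ρ^2 := by
    rw [abs_le]
    have h1 : 0 ≤ (2*π*CE + 1)*ρ^2 := by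
      apply mul_nonneg _ hρ2
      have : 0 ≤ 2*π*CE := mul_nonneg (by positivity) hCE0
      linarith
    have h2 : 2*π*(B^2*ρ^2) = (2*π*B^2)*ρ^2 := by ring
    have h3 : C*ρ^2 = (2*π*B^2)*ρ^2 + (2*π*CE + 1)*ρ^2 := by rw [hCdef]; ring
    have h4 : 0 ≤ C*ρ^2 := mul_nonneg hC0.le hρ2
    constructor
    · linarith [hL_lb, h4]
    · linarith [hL_ub, h1, h2, h3]
  -- energy bounds
  have hN0 : ∀ t : ℝ, 0 ≤ Np A B ρ (Real.cos (B*t)) := by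
    intro t
    rw [← cross_norm_sq]
    positivity
  have hptE : ∀ t : ℝ,
      Np A B ρ (Real.cos (B*t)) / (Real.sqrt (Qp A B ρ (Real.cos (B*t))))^5
        ≤ (A + CE*ρ^2) + (ρ*(2*B^2-A^2)/A)*Real.cos (B*t) := by
    intro t
    have h := energy_pointwise A B ρ (Real.cos (B*t)) hA2 hB2 hρ0 hρhalf
      (Real.abs_cos_le_one _) (hN0 t)
    rw [hCEdef]
    calc Np A B ρ (Real.cos (B*t)) / (Real.sqrt (Qp A B ρ (Real.cos (B*t))))^5
        ≤ A + ρ*(2*B^2-A^2)*(Real.cos (B*t))/A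
          + ((192*Mp A B + 64*B^2*NBp A B)/A^7)*ρ^2 := h
      _ = _ := by ring
  have hint_G : ∫ t in (0:ℝ)..(2*π),
      ((A + CE*ρ^2) + (ρ*(2*B^2-A^2)/A)*Real.cos (B*t)) = 2*π*(A + CE*ρ^2) := by
    rw [intervalIntegral.integral_add (intervalIntegrable_const)
        ((hcont_c.intervalIntegrable _ _).const_mul _),
      intervalIntegral.integral_const, intervalIntegral.integral_const_mul, hintcos]
    first
      | (simp; ring)
      | simp
  have hE_ub : bendingEnergy (torusCurve a b ρ) ≤ 2*π*(A + CE*ρ^2) := by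
    rw [energy_eq, ← hint_G]
    exact intervalIntegral.integral_mono_on hab (hcont_f.intervalIntegrable _ _)
      ((continuous_const.add (continuous_const.mul hcont_c)).intervalIntegrable _ _)
      (fun t _ => hptE t)
  have hEC : bendingEnergy (torusCurve a b ρ) ≤ 2*π*A + C*ρ^2 := by
    have h1 : 0 ≤ (2*π*B^2 + 1)*ρ^2 := mul_nonneg (by positivity) hρ2
    have h2 : C*ρ^2 = 2*π*CE*ρ^2 + (2*π*B^2 + 1)*ρ^2 := by rw [hCdef]; ring
    linarith [hE_ub, h1, h2]
  -- nonnegativity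
  have hE0 : 0 ≤ bendingEnergy (torusCurve a b ρ) := by
    rw [energy_eq]
    apply intervalIntegral.integral_nonneg hab
    intro u _
    exact div_nonneg (hN0 u) (by positivity)
  have hL0 : 0 ≤ curveLength (torusCurve a b ρ) := by
    rw [length_eq]
    apply intervalIntegral.integral_nonneg hab
    intro u _
    exact Real.sqrt_nonneg _
  refine ⟨hLC, hEC, ?_⟩
  have hLC2 : curveLength (torusCurve a b ρ) ≤ 2*π*A + C*ρ^2 := by
    have := (abs_le.mp hLC).2
    linarith
  have hRHS0 : 0 ≤ 2*π*A + C*ρ^2 := by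
    have : 0 < 2*π*A := by positivity
    nlinarith [mul_nonneg hC0.le hρ2]
  have hprod : curveLength (torusCurve a b ρ) * bendingEnergy (torusCurve a b ρ)
      ≤ (2*π*A + C*ρ^2) * (2*π*A + C*ρ^2) := mul_le_mul hLC2 hEC hE0 hRHS0
  have hρ1 : ρ^2 ≤ 1 := by nlinarith
  have h2 : (2*π*A + C*ρ^2) * (2*π*A + C*ρ^2) ≤ (2*π*A)^2 + C'*ρ^2 := by
    rw [hC'def]
    nlinarith [mul_le_mul_of_nonneg_left hρ1
      (mul_nonneg (mul_nonneg hC0.le hC0.le) hρ2)]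
  linarith
end

section
/- Let γ : ℝ/ℤ → ℝ³ be an arclength-parametrized H² closed curve with total curvature T(γ) = ∫₀¹|γ''| and inscribed closed polygon p determined by parameters 0 ≤ t₁ < t₂ < ... < tₙ < 1 (with vertices γ(tᵢ)). Then the total curvature of p (the sum of exterior angles at its vertices) is at most T(γ). -/
set_option maxHeartbeats 1000000

open Real Set MeasureTheory InnerProductGeometry
open scoped RealInnerProductSpace

section Geometry
variable {V : Type*} [NormedAddCommGroup V] [InnerProductSpace ℝ V]

private theorem arccos_anti {x y : ℝ} (h : x ≤ y) : Real.arccos y ≤ Real.arccos x := by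
  unfold Real.arccos
  have := Real.monotone_arcsin h
  linarith

/-- Triangle inequality for the unoriented angle. -/
theorem my_angle_triangle (x y z : V) : angle x z ≤ angle x y + angle y z := by
  by_cases hy : y = 0
  · subst hy
    rw [angle_zero_right, angle_zero_left]
    linarith [angle_le_pi x z]
  by_cases hx : x = 0
  · rw [hx, angle_zero_left, angle_zero_left]
    linarith [angle_nonneg y z]
  by_cases hz : z = 0
  · rw [hz, angle_zero_right, angle_zero_right]
    linarith [angle_nonneg x y]
  rcases le_or_gt π (angle x y + angle y z) with h | h
  · linarith [angle_le_pi x z]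
  have h0 : 0 ≤ angle x y + angle y z := add_nonneg (angle_nonneg _ _) (angle_nonneg _ _)
  have hnx : (0:ℝ) < ‖x‖ := norm_pos_iff.mpr hx
  have hny : (0:ℝ) < ‖y‖ := norm_pos_iff.mpr hy
  have hnz : (0:ℝ) < ‖z‖ := norm_pos_iff.mpr hz
  set Y : ℝ := ⟪y, y⟫ with hY
  have hYpos : 0 < Y := by
    rw [hY, real_inner_self_eq_norm_mul_norm]; exact mul_pos hny hny
  set Dx : ℝ := ⟪x, x⟫ * ⟪y, y⟫ - ⟪x, y⟫ * ⟪x, y⟫ with hDx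
  set Dz : ℝ := ⟪y, y⟫ * ⟪z, z⟫ - ⟪y, z⟫ * ⟪y, z⟫ with hDz
  set X' : V := Y • x - ⟪x, y⟫ • y with hX'
  set Z' : V := Y • z - ⟪y, z⟫ • y with hZ'
  have hcyx : ⟪y, x⟫ = ⟪x, y⟫ := real_inner_comm x y
  have hczy : ⟪z, y⟫ = ⟪y, z⟫ := real_inner_comm y z
  have hip : ⟪X', Z'⟫ = Y * (Y * ⟪x, z⟫ - ⟪x, y⟫ * ⟪y, z⟫) := by
    simp only [hX', hZ', inner_sub_left, inner_sub_right, real_inner_smul_left,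
      real_inner_smul_right]
    simp only [hcyx, hczy, ← hY]
    ring
  have hXX : ⟪X', X'⟫ = Y * Dx := by
    simp only [hX', inner_sub_left, inner_sub_right, real_inner_smul_left, real_inner_smul_right]
    simp only [hcyx, ← hY]
    rw [hDx, hY]
    ring
  have hZZ : ⟪Z', Z'⟫ = Y * Dz := by
    simp only [hZ', inner_sub_left, inner_sub_right, real_inner_smul_left, real_inner_smul_right]
    simp only [hczy, ← hY]
    rw [hDz, hY]
    ring
  have hXn : ‖X'‖ = Real.sqrt Y * Real.sqrt Dx := by
    rw [← Real.sqrt_mul (le_of_lt hYpos), ← hXX, real_inner_self_eq_norm_mul_norm,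
      Real.sqrt_mul_self (norm_nonneg _)]
  have hZn : ‖Z'‖ = Real.sqrt Y * Real.sqrt Dz := by
    rw [← Real.sqrt_mul (le_of_lt hYpos), ← hZZ, real_inner_self_eq_norm_mul_norm,
      Real.sqrt_mul_self (norm_nonneg _)]
  have hcs : -(‖X'‖ * ‖Z'‖) ≤ ⟪X', Z'⟫ := by
    have h1 := abs_real_inner_le_norm X' Z'
    have h2 := neg_abs_le (⟪X', Z'⟫ : ℝ)
    linarith
  have hkey : ⟪x, y⟫ * ⟪y, z⟫ - Real.sqrt Dx * Real.sqrt Dz ≤ ⟪x, z⟫ * Y := by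
    rw [hXn, hZn, hip] at hcs
    have hYs : Real.sqrt Y * Real.sqrt Y = Y := Real.mul_self_sqrt (le_of_lt hYpos)
    have hprod : Real.sqrt Y * Real.sqrt Dx * (Real.sqrt Y * Real.sqrt Dz)
        = Y * (Real.sqrt Dx * Real.sqrt Dz) := by
      rw [show Real.sqrt Y * Real.sqrt Dx * (Real.sqrt Y * Real.sqrt Dz)
          = (Real.sqrt Y * Real.sqrt Y) * (Real.sqrt Dx * Real.sqrt Dz) from by ring, hYs]
    rw [hprod] at hcs
    have h6 : 0 ≤ Y * (Y * ⟪x, z⟫ - ⟪x, y⟫ * ⟪y, z⟫ + Real.sqrt Dx * Real.sqrt Dz) := by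
      nlinarith [hcs]
    have h7 : 0 ≤ Y * ⟪x, z⟫ - ⟪x, y⟫ * ⟪y, z⟫ + Real.sqrt Dx * Real.sqrt Dz :=
      nonneg_of_mul_nonneg_right h6 hYpos
    nlinarith [h7]
  have hcos : Real.cos (angle x y + angle y z) * (‖x‖ * ‖z‖) ≤ ⟪x, z⟫ := by
    have e1 : Real.cos (angle x y) * (‖x‖ * ‖y‖) = ⟪x, y⟫ := cos_angle_mul_norm_mul_norm x y
    have e2 : Real.cos (angle y z) * (‖y‖ * ‖z‖) = ⟪y, z⟫ := cos_angle_mul_norm_mul_norm y z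
    have e3 : Real.sin (angle x y) * (‖x‖ * ‖y‖) = Real.sqrt Dx := by
      rw [sin_angle_mul_norm_mul_norm]
    have e4 : Real.sin (angle y z) * (‖y‖ * ‖z‖) = Real.sqrt Dz := by
      rw [sin_angle_mul_norm_mul_norm]
    have hYn : Y = ‖y‖ * ‖y‖ := real_inner_self_eq_norm_mul_norm y
    have expand : Real.cos (angle x y + angle y z) * (‖x‖ * ‖z‖) * Y
        = ⟪x, y⟫ * ⟪y, z⟫ - Real.sqrt Dx * Real.sqrt Dz := by
      rw [Real.cos_add, ← e1, ← e2, ← e3, ← e4, hYn]; ring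
    have hle : Real.cos (angle x y + angle y z) * (‖x‖ * ‖z‖) * Y ≤ ⟪x, z⟫ * Y := by
      rw [expand]; exact hkey
    exact le_of_mul_le_mul_right hle hYpos
  have hcos' : Real.cos (angle x y + angle y z) ≤ ⟪x, z⟫ / (‖x‖ * ‖z‖) := by
    rw [le_div_iff₀ (by positivity)]
    exact hcos
  calc angle x z = Real.arccos (⟪x, z⟫ / (‖x‖ * ‖z‖)) := rfl
    _ ≤ Real.arccos (Real.cos (angle x y + angle y z)) := arccos_anti hcos'
    _ = angle x y + angle y z := Real.arccos_cos h0 h.le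

end Geometry

section Geometry2
variable {V : Type*} [NormedAddCommGroup V] [InnerProductSpace ℝ V]

/-- If `x` is a nonnegative combination of `p` and `q`, the angles add up exactly. -/
theorem angle_add_angle_of_nonneg_comb {p q x : V} (hp : p ≠ 0) (hq : q ≠ 0) (hx : x ≠ 0)
    {s t : ℝ} (hs : 0 ≤ s) (ht : 0 ≤ t) (hxe : x = s • p + t • q) :
    angle p x + angle x q = angle p q := by
  have hnp : (0:ℝ) < ‖p‖ := norm_pos_iff.mpr hp
  have hnx : (0:ℝ) < ‖x‖ := norm_pos_iff.mpr hx
  have hnq : (0:ℝ) < ‖q‖ := norm_pos_iff.mpr hq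
  set a : ℝ := ⟪p, p⟫ with ha
  set b : ℝ := ⟪p, q⟫ with hb
  set c : ℝ := ⟪q, q⟫ with hc
  set D : ℝ := a * c - b * b with hD
  have hqp : ⟪q, p⟫ = b := (real_inner_comm q p).symm
  have ipx : ⟪p, x⟫ = s * a + t * b := by
    rw [hxe, inner_add_right, real_inner_smul_right, real_inner_smul_right]
  have ixq : ⟪x, q⟫ = s * b + t * c := by
    rw [hxe, inner_add_left, real_inner_smul_left, real_inner_smul_left]
  have iXX : ⟪x, x⟫ = s ^ 2 * a + 2 * s * t * b + t ^ 2 * c := by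
    nth_rewrite 1 [hxe]
    nth_rewrite 1 [hxe]
    simp only [inner_add_left, inner_add_right, real_inner_smul_left, real_inner_smul_right]
    rw [hqp, ← ha, ← hb, ← hc]
    ring
  set X : ℝ := ⟪x, x⟫ with hXdef
  have hXn : X = ‖x‖ * ‖x‖ := real_inner_self_eq_norm_mul_norm x
  have han : a = ‖p‖ * ‖p‖ := real_inner_self_eq_norm_mul_norm p
  have hcn : c = ‖q‖ * ‖q‖ := real_inner_self_eq_norm_mul_norm q
  have hXpos : 0 < X := by rw [hXn]; exact mul_pos hnx hnx
  have hDnn : 0 ≤ D := by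
    have h1 := abs_real_inner_le_norm p q
    have h2 : |b| * |b| ≤ (‖p‖ * ‖q‖) * (‖p‖ * ‖q‖) :=
      mul_le_mul h1 h1 (abs_nonneg _) (by positivity)
    rw [abs_mul_abs_self] at h2
    rw [hD, han, hcn]
    nlinarith [h2]
  have hsD : Real.sqrt D * Real.sqrt D = D := Real.mul_self_sqrt hDnn
  -- cosines and sines times norms
  have e1 : Real.cos (angle p x) * (‖p‖ * ‖x‖) = s * a + t * b := by
    rw [cos_angle_mul_norm_mul_norm, ipx]
  have e2 : Real.cos (angle x q) * (‖x‖ * ‖q‖) = s * b + t * c := by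
    rw [cos_angle_mul_norm_mul_norm, ixq]
  have e3 : Real.sin (angle p x) * (‖p‖ * ‖x‖) = t * Real.sqrt D := by
    rw [sin_angle_mul_norm_mul_norm, ipx, ← hXdef, iXX]
    rw [show a * (s ^ 2 * a + 2 * s * t * b + t ^ 2 * c) - (s * a + t * b) * (s * a + t * b)
        = t ^ 2 * D from by rw [hD]; ring]
    rw [Real.sqrt_mul (sq_nonneg t), Real.sqrt_sq ht]
  have e4 : Real.sin (angle x q) * (‖x‖ * ‖q‖) = s * Real.sqrt D := by
    rw [sin_angle_mul_norm_mul_norm, ixq, ← hXdef, iXX]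
    rw [show (s ^ 2 * a + 2 * s * t * b + t ^ 2 * c) * c - (s * b + t * c) * (s * b + t * c)
        = s ^ 2 * D from by rw [hD]; ring]
    rw [Real.sqrt_mul (sq_nonneg s), Real.sqrt_sq hs]
  have e5 : Real.cos (angle p q) * (‖p‖ * ‖q‖) = b := by
    rw [cos_angle_mul_norm_mul_norm]
  have e6 : Real.sin (angle p q) * (‖p‖ * ‖q‖) = Real.sqrt D := by
    rw [sin_angle_mul_norm_mul_norm]
  -- cos and sin of the sum
  have hcossum : Real.cos (angle p x + angle x q) = Real.cos (angle p q) := by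
    have expand : Real.cos (angle p x + angle x q) * ((‖p‖ * ‖q‖) * X)
        = Real.cos (angle p q) * ((‖p‖ * ‖q‖) * X) := by
      have lhs : Real.cos (angle p x + angle x q) * ((‖p‖ * ‖q‖) * X)
          = (s * a + t * b) * (s * b + t * c) - t * Real.sqrt D * (s * Real.sqrt D) := by
        rw [Real.cos_add, ← e1, ← e2, ← e3, ← e4, hXn]; ring
      have rhs : Real.cos (angle p q) * ((‖p‖ * ‖q‖) * X) = b * X := by
        rw [← e5]; ring
      rw [lhs, rhs, show t * Real.sqrt D * (s * Real.sqrt D)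
          = s * t * (Real.sqrt D * Real.sqrt D) from by ring, hsD, iXX, hD]
      ring
    exact mul_right_cancel₀ (by positivity) expand
  have hsinsum : Real.sin (angle p x + angle x q) = Real.sin (angle p q) := by
    have expand : Real.sin (angle p x + angle x q) * ((‖p‖ * ‖q‖) * X)
        = Real.sin (angle p q) * ((‖p‖ * ‖q‖) * X) := by
      have lhs : Real.sin (angle p x + angle x q) * ((‖p‖ * ‖q‖) * X)
          = t * Real.sqrt D * (s * b + t * c) + (s * a + t * b) * (s * Real.sqrt D) := by
        rw [Real.sin_add, ← e1, ← e2, ← e3, ← e4, hXn]; ring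
      have rhs : Real.sin (angle p q) * ((‖p‖ * ‖q‖) * X) = Real.sqrt D * X := by
        rw [← e6]; ring
      rw [lhs, rhs, iXX]
      ring
    exact mul_right_cancel₀ (by positivity) expand
  -- conclude
  set S : ℝ := angle p x + angle x q with hS
  have hS0 : 0 ≤ S := add_nonneg (angle_nonneg _ _) (angle_nonneg _ _)
  have hSle : S ≤ π := by
    by_contra hgt
    push_neg at hgt
    have hS2 : S ≤ 2 * π := by
      have := angle_le_pi p x
      have := angle_le_pi x q
      rw [hS]; linarith
    rcases lt_or_eq_of_le hS2 with hlt | heq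
    · have hpos : 0 < Real.sin (S - π) := Real.sin_pos_of_pos_of_lt_pi (by linarith) (by linarith)
      have hneg : Real.sin S < 0 := by
        have : Real.sin S = -Real.sin (S - π) := by
          nth_rewrite 1 [show S = (S - π) + π from by ring]
          rw [Real.sin_add_pi]
        rw [this]; linarith
      have hnn : 0 ≤ Real.sin (angle p q) :=
        Real.sin_nonneg_of_nonneg_of_le_pi (angle_nonneg _ _) (angle_le_pi _ _)
      rw [hsinsum] at hneg
      linarith
    · have hApi : angle p x = π := by
        have := angle_le_pi p x
        have := angle_le_pi x q
        rw [hS] at heq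
        linarith
      have hBpi : angle x q = π := by
        have := angle_le_pi p x
        rw [hS] at heq
        linarith
      obtain ⟨-, r, hr, hxr⟩ := angle_eq_pi_iff.mp hApi
      obtain ⟨-, r', hr', hqr⟩ := angle_eq_pi_iff.mp hBpi
      -- x = r • p, q = r' • x = (r' * r) • p
      have hqp' : q = (r' * r) • p := by rw [hqr, hxr, smul_smul]
      have heqp : r • p = (s + t * (r' * r)) • p := by
        rw [← hxr, hxe, hqp', smul_smul, ← add_smul]
      have h0 : r = s + t * (r' * r) := smul_left_injective ℝ hp heqp
      have hrr : 0 < r' * r := mul_pos_of_neg_of_neg hr' hr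
      linarith [mul_nonneg ht hrr.le]
  have hφ0 : 0 ≤ angle p q := angle_nonneg _ _
  have hφle : angle p q ≤ π := angle_le_pi _ _
  exact Real.injOn_cos ⟨hS0, hSle⟩ ⟨hφ0, hφle⟩ hcossum

end Geometry2

section Geometry3
variable {V : Type*} [NormedAddCommGroup V] [InnerProductSpace ℝ V]

theorem angle_le_chord_add_cube {u v : V} (hu : ‖u‖ = 1) (hv : ‖v‖ = 1)
    (h : ‖u - v‖ ≤ 1 / 2) : angle u v ≤ ‖u - v‖ + ‖u - v‖ ^ 3 := by
  set ch : ℝ := ‖u - v‖ with hch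
  have hch0 : (0:ℝ) ≤ ch := norm_nonneg _
  have hinner : ⟪u, v⟫ = 1 - ch ^ 2 / 2 := by
    have hsq : ch ^ 2 = ‖u‖ ^ 2 - 2 * ⟪u, v⟫ + ‖v‖ ^ 2 := by
      rw [hch]; exact norm_sub_sq_real u v
    rw [hu, hv] at hsq
    linarith
  have hy1 : |ch + ch ^ 3| ≤ 1 := by
    rw [abs_of_nonneg (by positivity)]
    nlinarith
  have hcosle : Real.cos (ch + ch ^ 3) ≤ 1 - ch ^ 2 / 2 := by
    have hb := Real.cos_bound hy1
    rw [abs_of_nonneg (by positivity : (0:ℝ) ≤ ch + ch ^ 3)] at hb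
    have hb' : Real.cos (ch + ch ^ 3) ≤ 1 - (ch + ch ^ 3) ^ 2 / 2 + (ch + ch ^ 3) ^ 4 * (5 / 96) :=
      by cases' abs_le.mp hb with h1 h2; linarith
    have h4 : ch + ch ^ 3 ≤ 5 / 4 * ch := by nlinarith
    have h5 : (ch + ch ^ 3) ^ 4 ≤ (5 / 4 * ch) ^ 4 := pow_le_pow_left₀ (by positivity) h4 4
    nlinarith [h5, hb', pow_nonneg hch0 6, pow_nonneg hch0 4]
  have hangle : angle u v = Real.arccos (1 - ch ^ 2 / 2) := by
    rw [angle, hu, hv, hinner]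
    norm_num
  rw [hangle]
  calc Real.arccos (1 - ch ^ 2 / 2) ≤ Real.arccos (Real.cos (ch + ch ^ 3)) :=
        arccos_anti hcosle
    _ = ch + ch ^ 3 := Real.arccos_cos (by positivity)
        (by nlinarith [Real.pi_gt_three])

theorem angle_le_arccos_of_close {x y : V} (hx : x ≠ 0) {ρ : ℝ} (hρ : ‖y - x‖ ≤ ρ)
    (hρx : ρ < ‖x‖) : angle x y ≤ Real.arccos ((‖x‖ - ρ) / (‖x‖ + ρ)) := by
  have hρ0 : 0 ≤ ρ := le_trans (norm_nonneg _) hρ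
  have hnx : (0:ℝ) < ‖x‖ := norm_pos_iff.mpr hx
  have hny : (0:ℝ) < ‖y‖ := by
    have h1 : ‖x‖ - ‖y‖ ≤ ‖x - y‖ := norm_sub_norm_le x y
    rw [norm_sub_rev] at h1
    linarith
  have hyle : ‖y‖ ≤ ‖x‖ + ρ := by
    have h1 : ‖y‖ - ‖x‖ ≤ ‖y - x‖ := norm_sub_norm_le y x
    linarith
  have hipxy : ‖x‖ * (‖x‖ - ρ) ≤ ⟪x, y⟫ := by
    have hdec : ⟪x, y⟫ = ⟪x, x⟫ + ⟪x, y - x⟫ := by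
      rw [inner_sub_right]; ring
    have h2 : |⟪x, (y - x : V)⟫| ≤ ‖x‖ * ‖y - x‖ := abs_real_inner_le_norm x (y - x)
    have h3 : -(‖x‖ * ρ) ≤ ⟪x, (y - x : V)⟫ := by
      have := neg_abs_le (⟪x, (y - x : V)⟫ : ℝ)
      have h4 : ‖x‖ * ‖y - x‖ ≤ ‖x‖ * ρ := by
        apply mul_le_mul_of_nonneg_left hρ (norm_nonneg x)
      linarith
    rw [hdec, real_inner_self_eq_norm_mul_norm]
    nlinarith
  have hfrac : (‖x‖ - ρ) / (‖x‖ + ρ) ≤ ⟪x, y⟫ / (‖x‖ * ‖y‖) := by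
    rw [div_le_div_iff₀ (by positivity) (by positivity)]
    nlinarith [mul_le_mul_of_nonneg_left hyle
        (mul_nonneg (sub_nonneg.mpr hρx.le) hnx.le),
      mul_le_mul_of_nonneg_right hipxy (by positivity : (0:ℝ) ≤ ‖x‖ + ρ)]
  exact arccos_anti hfrac

theorem angle_chain (v : ℕ → V) (hv : ∀ j, v j ≠ 0) (m : ℕ) :
    angle (v 0) (v m) ≤ ∑ j ∈ Finset.range m, angle (v j) (v (j + 1)) := by
  induction m with
  | zero => simp [angle_self (hv 0)]
  | succ k ih =>
    rw [Finset.sum_range_succ]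
    calc angle (v 0) (v (k + 1)) ≤ angle (v 0) (v k) + angle (v k) (v (k + 1)) :=
          my_angle_triangle _ _ _
      _ ≤ _ := by linarith

theorem discrete_edge_lemma (v : ℕ → V) (lam : ℕ → ℝ) (hv : ∀ j, ‖v j‖ = 1)
    (hl : ∀ j, 0 ≤ lam j) (m : ℕ)
    (hW : (∑ j ∈ Finset.range (m + 1), lam j • v j) ≠ 0) :
    angle (v 0) (∑ j ∈ Finset.range (m + 1), lam j • v j)
      + angle (∑ j ∈ Finset.range (m + 1), lam j • v j) (v m)
      ≤ ∑ j ∈ Finset.range m, angle (v j) (v (j + 1)) := by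
  have hvne : ∀ j, v j ≠ 0 := fun j => by
    intro h0; have := hv j; rw [h0, norm_zero] at this; norm_num at this
  induction m with
  | zero =>
    simp only [zero_add, Finset.sum_range_one, Finset.range_zero, Finset.sum_empty] at hW ⊢
    have hl0 : 0 < lam 0 := by
      rcases lt_or_eq_of_le (hl 0) with h | h
      · exact h
      · exfalso; apply hW; rw [← h, zero_smul]
    rw [angle_smul_right_of_pos _ _ hl0, angle_smul_left_of_pos _ _ hl0,
      angle_self (hvne 0)]
    norm_num
  | succ k ih =>
    rw [Finset.sum_range_succ] at hW ⊢
    set Wk : V := ∑ j ∈ Finset.range (k + 1), lam j • v j with hWk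
    by_cases hWk0 : Wk = 0
    · rw [hWk0, zero_add] at hW ⊢
      have hlk : 0 < lam (k + 1) := by
        rcases lt_or_eq_of_le (hl (k + 1)) with h | h
        · exact h
        · exfalso; apply hW; rw [← h, zero_smul]
      rw [angle_smul_right_of_pos _ _ hlk, angle_smul_left_of_pos _ _ hlk,
        angle_self (hvne (k + 1))]
      rw [Finset.sum_range_succ]
      have hc := angle_chain v hvne (k + 1)
      rw [Finset.sum_range_succ] at hc
      linarith
    · have h1 := ih hWk0
      have h2 : angle (v 0) (Wk + lam (k + 1) • v (k + 1))
          ≤ angle (v 0) Wk + angle Wk (Wk + lam (k + 1) • v (k + 1)) :=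
        my_angle_triangle _ _ _
      have h3 : angle Wk (Wk + lam (k + 1) • v (k + 1))
          + angle (Wk + lam (k + 1) • v (k + 1)) (v (k + 1)) = angle Wk (v (k + 1)) :=
        angle_add_angle_of_nonneg_comb hWk0 (hvne (k + 1)) hW zero_le_one (hl (k + 1))
          (by rw [one_smul])
      have h4 : angle Wk (v (k + 1)) ≤ angle Wk (v k) + angle (v k) (v (k + 1)) :=
        my_angle_triangle _ _ _
      rw [Finset.sum_range_succ]
      linarith

end Geometry3

section Analytic
variable {V : Type*} [NormedAddCommGroup V] [InnerProductSpace ℝ V] [CompleteSpace V]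

/-- The key "edge lemma": the angle from the initial tangent to the chord plus the angle
from the chord to the final tangent is at most the total curvature of the arc. -/
theorem edge_lemma (γ γ' γ'' : ℝ → V)
    (hd1 : ∀ t, HasDerivAt γ (γ' t) t)
    (harc : ∀ t, ‖γ' t‖ = 1)
    (hac : ∀ t, γ' t = γ' 0 + ∫ s in (0:ℝ)..t, γ'' s)
    (hii : ∀ a b, IntervalIntegrable γ'' volume a b)
    {c d : ℝ} (hcd : c < d) (hWne : γ d - γ c ≠ 0) :
    angle (γ' c) (γ d - γ c) + angle (γ d - γ c) (γ' d) ≤ ∫ s in c..d, ‖γ'' s‖ := by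
  -- basic setup
  have hnii : ∀ a b, IntervalIntegrable (fun s => ‖γ'' s‖) volume a b := fun a b => (hii a b).norm
  set θ : ℝ → ℝ := fun s => ∫ u in (0:ℝ)..s, ‖γ'' u‖ with hθ
  have hθcont : Continuous θ := intervalIntegral.continuous_primitive hnii 0
  have hθdiff : ∀ a b : ℝ, θ b - θ a = ∫ s in a..b, ‖γ'' s‖ := by
    intro a b
    rw [hθ]
    exact intervalIntegral.integral_interval_sub_left (hnii 0 b) (hnii 0 a)
  have hT' : ∀ a b : ℝ, γ' b - γ' a = ∫ s in a..b, γ'' s := by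
    intro a b
    rw [hac a, hac b]
    have := intervalIntegral.integral_interval_sub_left (hii 0 b) (hii 0 a)
    rw [← this]
    abel
  have hTdist : ∀ a b : ℝ, a ≤ b → ‖γ' b - γ' a‖ ≤ θ b - θ a := by
    intro a b hab
    rw [hT' a b, hθdiff a b]
    exact intervalIntegral.norm_integral_le_integral_norm hab
  have hTcont : Continuous γ' := by
    have h1 : Continuous (fun t : ℝ => γ' 0 + ∫ s in (0:ℝ)..t, γ'' s) :=
      continuous_const.add (intervalIntegral.continuous_primitive hii 0)
    exact h1.congr (fun t => (hac t).symm)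
  have hTii : ∀ a b : ℝ, IntervalIntegrable γ' volume a b := fun a b =>
    hTcont.intervalIntegrable a b
  have hchord : ∀ a b : ℝ, γ b - γ a = ∫ s in a..b, γ' s := fun a b =>
    (intervalIntegral.integral_eq_sub_of_hasDerivAt (fun t _ => hd1 t) (hTii a b)).symm
  set W : V := γ d - γ c with hW
  set K : ℝ := ∫ s in c..d, ‖γ'' s‖ with hK
  have hKθ : K = θ d - θ c := (hθdiff c d).symm
  have hK0 : 0 ≤ K := by
    rw [hK]
    exact intervalIntegral.integral_nonneg hcd.le (fun u _ => norm_nonneg _)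
  have hWpos : 0 < ‖W‖ := norm_pos_iff.mpr hWne
  have hdc : 0 < d - c := sub_pos.mpr hcd
  -- it suffices to prove the bound up to η
  apply le_of_forall_pos_le_add
  intro η hη
  -- continuity of the arccos error term at 0
  set ψ : ℝ → ℝ := fun ρ => Real.arccos ((‖W‖ - ρ) / (‖W‖ + ρ)) with hψdef
  have hψcont : ContinuousAt ψ 0 := by
    apply Real.continuous_arccos.continuousAt.comp
    exact ContinuousAt.div (by fun_prop) (by fun_prop) (by positivity)
  have hψ0 : ψ 0 = 0 := by
    rw [hψdef]
    simp only [sub_zero, add_zero]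
    rw [div_self hWpos.ne']
    exact Real.arccos_one
  obtain ⟨δ₀, hδ₀pos, hδ₀⟩ := Metric.continuousAt_iff.mp hψcont (η / 4) (by positivity)
  -- choose ε
  set ε : ℝ := min (1 / 2) (min (δ₀ / (d - c + 1)) (min (‖W‖ / (d - c + 1)) (η / (2 * (K + 1)))))
    with hε
  have hεpos : 0 < ε := by
    rw [hε]
    have h1 : (0:ℝ) < δ₀ / (d - c + 1) := by positivity
    have h2 : (0:ℝ) < ‖W‖ / (d - c + 1) := by positivity
    have h3 : (0:ℝ) < η / (2 * (K + 1)) := by positivity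
    positivity
  have hεhalf : ε ≤ 1 / 2 := min_le_left _ _
  have hερ : (d - c) * ε < δ₀ := by
    have h1 : ε ≤ δ₀ / (d - c + 1) := le_trans (min_le_right _ _) (min_le_left _ _)
    have h2 : (d - c) * ε ≤ (d - c) * (δ₀ / (d - c + 1)) :=
      mul_le_mul_of_nonneg_left h1 hdc.le
    have h3 : (d - c) * (δ₀ / (d - c + 1)) < δ₀ := by
      rw [mul_div_assoc'] at *
      rw [div_lt_iff₀ (by linarith)]
      nlinarith
    linarith
  have hεW : (d - c) * ε < ‖W‖ := by
    have h1 : ε ≤ ‖W‖ / (d - c + 1) :=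
      le_trans (min_le_right _ _) (le_trans (min_le_right _ _) (min_le_left _ _))
    have h2 : (d - c) * ε ≤ (d - c) * (‖W‖ / (d - c + 1)) :=
      mul_le_mul_of_nonneg_left h1 hdc.le
    have h3 : (d - c) * (‖W‖ / (d - c + 1)) < ‖W‖ := by
      rw [mul_div_assoc']
      rw [div_lt_iff₀ (by linarith)]
      nlinarith
    linarith
  have hεη : ε ^ 2 * K ≤ η / 2 := by
    have h1 : ε ≤ η / (2 * (K + 1)) :=
      le_trans (min_le_right _ _) (le_trans (min_le_right _ _) (min_le_right _ _))
    have h2 : ε ^ 2 ≤ ε := by nlinarith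
    have h3 : ε * K ≤ (η / (2 * (K + 1))) * K := mul_le_mul_of_nonneg_right h1 hK0
    have h4 : (η / (2 * (K + 1))) * K ≤ η / 2 := by
      rw [div_mul_eq_mul_div, div_le_div_iff₀ (by positivity) (by norm_num)]
      nlinarith
    nlinarith [mul_le_mul_of_nonneg_right h2 hK0]
  -- uniform continuity of θ on [c,d]
  obtain ⟨δ, hδpos, hδ⟩ := Metric.uniformContinuousOn_iff.mp
    (isCompact_Icc.uniformContinuousOn_of_continuous (hθcont.continuousOn)) ε hεpos
  -- choose the partition
  obtain ⟨m, hm⟩ := exists_nat_gt ((d - c) / δ)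
  have hmpos : 0 < (m:ℝ) := lt_of_le_of_lt (by positivity) hm
  have hmnat : 0 < m := by exact_mod_cast hmpos
  set Δ : ℝ := (d - c) / m with hΔ
  have hΔpos : 0 < Δ := by positivity
  have hΔδ : Δ < δ := by
    rw [hΔ, div_lt_iff₀ hmpos]
    rw [div_lt_iff₀ hδpos] at hm
    linarith [hm]
  set s_ : ℕ → ℝ := fun j => c + j * Δ with hs_
  have hs0 : s_ 0 = c := by simp [hs_]
  have hsm : s_ m = d := by
    rw [hs_]
    simp only
    rw [hΔ]
    field_simp
    ring
  have hsadj : ∀ j : ℕ, s_ (j + 1) - s_ j = Δ := by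
    intro j
    rw [hs_]
    simp only
    push_cast
    ring
  have hsmono : ∀ j k : ℕ, j ≤ k → s_ j ≤ s_ k := by
    intro j k hjk
    rw [hs_]
    simp only
    have : (j:ℝ) ≤ k := by exact_mod_cast hjk
    nlinarith
  have hsmem : ∀ j : ℕ, j ≤ m → s_ j ∈ Icc c d := by
    intro j hj
    constructor
    · rw [hs_]
      simp only
      have : 0 ≤ (j:ℝ) * Δ := by positivity
      linarith
    · rw [← hsm]; exact hsmono j m hj
  -- the polygonal approximation
  set v : ℕ → V := fun j => γ' (s_ j) with hv
  set lam : ℕ → ℝ := fun j => if j < m then Δ else 0 with hlam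
  set Wt : V := ∑ j ∈ Finset.range (m + 1), lam j • v j with hWt
  have hWt_eq : Wt = ∑ j ∈ Finset.range m, Δ • v j := by
    rw [hWt, Finset.sum_range_succ]
    rw [hlam]
    simp only [lt_irrefl, if_neg, ite_false]
    rw [zero_smul, add_zero]
    apply Finset.sum_congr rfl
    intro j hj
    rw [if_pos (Finset.mem_range.mp hj)]
  -- closeness of W and Wt
  have hpiece : ∀ j : ℕ, j < m → ‖(∫ x in (s_ j)..(s_ (j + 1)), γ' x) - Δ • v j‖ ≤ ε * Δ := by
    intro j hj
    have hadj := hsadj j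
    have hint : (∫ x in (s_ j)..(s_ (j + 1)), γ' x) - Δ • v j
        = ∫ x in (s_ j)..(s_ (j + 1)), (γ' x - v j) := by
      rw [intervalIntegral.integral_sub (hTii _ _) (intervalIntegrable_const),
        intervalIntegral.integral_const, hadj]
    rw [hint]
    have hbound : ∀ x ∈ Set.uIoc (s_ j) (s_ (j + 1)), ‖γ' x - v j‖ ≤ ε := by
      intro x hx
      have hle : s_ j ≤ s_ (j + 1) := by linarith [hadj, hΔpos]
      rw [Set.uIoc_of_le hle] at hx
      have hxc : x ∈ Icc c d := by
        constructor
        · linarith [(hsmem j hj.le).1, hx.1.le]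
        · linarith [(hsmem (j + 1) hj).2, hx.2]
      have hdist : dist x (s_ j) < δ := by
        rw [Real.dist_eq, abs_of_nonneg (by linarith [hx.1.le])]
        linarith [hx.2, hadj, hΔδ]
      have hθd := hδ x hxc (s_ j) (hsmem j hj.le) hdist
      rw [Real.dist_eq] at hθd
      have h1 : ‖γ' x - γ' (s_ j)‖ ≤ θ x - θ (s_ j) := hTdist _ _ hx.1.le
      have h2 : θ x - θ (s_ j) ≤ |θ x - θ (s_ j)| := le_abs_self _
      rw [hv]
      linarith
    have hnorm := intervalIntegral.norm_integral_le_of_norm_le_const hbound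
    rw [hadj, abs_of_pos hΔpos] at hnorm
    exact hnorm
  have hclose : ‖W - Wt‖ ≤ (d - c) * ε := by
    have hWsum : W = ∑ j ∈ Finset.range m, ∫ x in (s_ j)..(s_ (j + 1)), γ' x := by
      rw [hW, hchord c d, ← hs0, ← hsm]
      exact (intervalIntegral.sum_integral_adjacent_intervals
        (fun k _ => hTii (s_ k) (s_ (k + 1)))).symm
    rw [hWsum, hWt_eq, ← Finset.sum_sub_distrib]
    calc ‖∑ j ∈ Finset.range m, ((∫ x in (s_ j)..(s_ (j + 1)), γ' x) - Δ • v j)‖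
        ≤ ∑ j ∈ Finset.range m, ‖(∫ x in (s_ j)..(s_ (j + 1)), γ' x) - Δ • v j‖ :=
          norm_sum_le _ _
      _ ≤ ∑ j ∈ Finset.range m, ε * Δ :=
          Finset.sum_le_sum (fun j hj => hpiece j (Finset.mem_range.mp hj))
      _ = m * (ε * Δ) := by rw [Finset.sum_const, Finset.card_range, nsmul_eq_mul]
      _ = (d - c) * ε := by rw [hΔ]; field_simp
  have hWtne : Wt ≠ 0 := by
    intro h0
    rw [h0, sub_zero] at hclose
    linarith [hεW, hclose]
  -- apply the discrete lemma
  have hdisc := discrete_edge_lemma v lam (fun j => harc _)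
    (fun j => by rw [hlam]; dsimp only; split <;> simp [hΔpos.le]) m (hWt ▸ hWtne)
  rw [← hWt] at hdisc
  -- per-piece angle bound
  have hangles : ∑ j ∈ Finset.range m, angle (v j) (v (j + 1)) ≤ (1 + ε ^ 2) * K := by
    have hper : ∀ j, j < m → angle (v j) (v (j + 1))
        ≤ (θ (s_ (j + 1)) - θ (s_ j)) * (1 + ε ^ 2) := by
      intro j hj
      set D : ℝ := θ (s_ (j + 1)) - θ (s_ j) with hD
      have hD0 : 0 ≤ D := by
        rw [hD, hθdiff]
        exact intervalIntegral.integral_nonneg (by linarith [hsadj j, hΔpos])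
          (fun u _ => norm_nonneg _)
      have hDε : D ≤ ε := by
        have hdist : dist (s_ (j + 1)) (s_ j) < δ := by
          rw [Real.dist_eq, hsadj j, abs_of_pos hΔpos]
          exact hΔδ
        have := hδ (s_ (j + 1)) (hsmem (j + 1) hj) (s_ j) (hsmem j hj.le) hdist
        rw [Real.dist_eq] at this
        calc D ≤ |θ (s_ (j + 1)) - θ (s_ j)| := le_abs_self _
          _ ≤ ε := this.le
      have hch : ‖v j - v (j + 1)‖ ≤ D := by
        rw [norm_sub_rev, hv, hD]
        exact hTdist _ _ (by linarith [hsadj j, hΔpos])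
      have hch2 : ‖v j - v (j + 1)‖ ≤ 1 / 2 := le_trans hch (le_trans hDε hεhalf)
      have h1 := angle_le_chord_add_cube (harc (s_ j)) (harc (s_ (j + 1))) hch2
      have h2 : ‖v j - v (j + 1)‖ ^ 3 ≤ D * ε ^ 2 := by
        calc ‖v j - v (j + 1)‖ ^ 3 ≤ D ^ 3 := by
              apply pow_le_pow_left₀ (norm_nonneg _) hch
          _ = D * D ^ 2 := by ring
          _ ≤ D * ε ^ 2 := by
              apply mul_le_mul_of_nonneg_left _ hD0
              exact pow_le_pow_left₀ hD0 hDε 2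
      calc angle (v j) (v (j + 1)) ≤ ‖v j - v (j + 1)‖ + ‖v j - v (j + 1)‖ ^ 3 := h1
        _ ≤ D + D * ε ^ 2 := add_le_add hch h2
        _ = D * (1 + ε ^ 2) := by ring
    calc ∑ j ∈ Finset.range m, angle (v j) (v (j + 1))
        ≤ ∑ j ∈ Finset.range m, (θ (s_ (j + 1)) - θ (s_ j)) * (1 + ε ^ 2) :=
          Finset.sum_le_sum (fun j hj => hper j (Finset.mem_range.mp hj))
      _ = (θ (s_ m) - θ (s_ 0)) * (1 + ε ^ 2) := by
          rw [← Finset.sum_mul, Finset.sum_range_sub (fun j => θ (s_ j))]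
      _ = (1 + ε ^ 2) * K := by rw [hs0, hsm, ← hKθ]; ring
  -- the angle between W and Wt is small
  have hangW : angle W Wt < η / 4 := by
    have h1 : ‖Wt - W‖ ≤ (d - c) * ε := by rw [norm_sub_rev]; exact hclose
    have h2 := angle_le_arccos_of_close hWne h1 hεW
    have h3 : dist ((d - c) * ε) 0 < δ₀ := by
      rw [Real.dist_eq, sub_zero, abs_of_pos (by positivity)]
      exact hερ
    have h4 := hδ₀ h3
    rw [hψ0, Real.dist_eq, sub_zero] at h4
    have h5 : ψ ((d - c) * ε) ≥ 0 := Real.arccos_nonneg _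
    have h6 : ψ ((d - c) * ε) < η / 4 := by
      rw [abs_of_nonneg h5] at h4
      exact h4
    calc angle W Wt ≤ ψ ((d - c) * ε) := h2
      _ < η / 4 := h6
  -- combine everything
  have hv0 : v 0 = γ' c := by rw [hv]; simp only; rw [hs0]
  have hvm : v m = γ' d := by rw [hv]; simp only; rw [hsm]
  have t1 : angle (γ' c) W ≤ angle (γ' c) Wt + angle Wt W := my_angle_triangle _ _ _
  have t2 : angle W (γ' d) ≤ angle W Wt + angle Wt (γ' d) := my_angle_triangle _ _ _
  have hcomm : angle Wt W = angle W Wt := angle_comm _ _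
  rw [hv0, hvm] at hdisc
  calc angle (γ' c) W + angle W (γ' d)
      ≤ (angle (γ' c) Wt + angle Wt (γ' d)) + 2 * angle W Wt := by
        rw [hcomm] at t1
        linarith
    _ ≤ (1 + ε ^ 2) * K + 2 * (η / 4) := by
        have := le_trans hdisc hangles
        linarith [hangW, this]
    _ ≤ K + η := by nlinarith [hεη]

end Analytic

/-- **Milnor's monotonicity of total curvature under inscription of polygons.**
Let `γ : ℝ/ℤ → ℝ³` be an arclength-parametrized `H²` closed curve and let
`0 ≤ t₀ < t₁ < ⋯ < t_{n−1} < 1` determine an inscribed closed polygon with vertices `γ(tᵢ)`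
(and nondegenerate edges).  Then the total curvature of the polygon — the sum of the exterior
angles at its vertices — is at most the total curvature `T(γ) = ∫₀¹ |γ''|` of the curve. -/
theorem stmt_15 (γ γ' γ'' : ℝ → EuclideanSpace ℝ (Fin 3))
    (hper : Function.Periodic γ 1) (hper'' : Function.Periodic γ'' 1)
    (hd1 : ∀ t, HasDerivAt γ (γ' t) t)
    (harc : ∀ t, ‖γ' t‖ = 1)
    (hac : ∀ t, γ' t = γ' 0 + ∫ s in (0:ℝ)..t, γ'' s)
    (hint : IntegrableOn γ'' (Icc (0:ℝ) 1))
    (n : ℕ) [NeZero n] (hn : 2 ≤ n)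
    (t : Fin n → ℝ) (hmono : StrictMono t)
    (hrange : ∀ i, t i ∈ Ico (0:ℝ) 1)
    (hedges : ∀ i : Fin n, γ (t (i + 1)) ≠ γ (t i)) :
    (∑ i : Fin n, InnerProductGeometry.angle
        (γ (t i) - γ (t (i - 1))) (γ (t (i + 1)) - γ (t i)))
      ≤ ∫ s in (0:ℝ)..1, ‖γ'' s‖ := by
  obtain ⟨n', rfl⟩ : ∃ n', n = n' + 1 :=
    ⟨n - 1, (Nat.succ_pred_eq_of_pos (Nat.pos_of_ne_zero (NeZero.ne n))).symm⟩
  -- global interval integrability of γ''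
  have h01 : IntervalIntegrable γ'' volume 0 1 := by
    rw [intervalIntegrable_iff_integrableOn_Ioc_of_le zero_le_one]
    exact hint.mono_set Ioc_subset_Icc_self
  have hz : ∀ z : ℤ, IntervalIntegrable γ'' volume (z : ℝ) ((z : ℝ) + 1) := by
    intro z
    have h2 := h01.comp_sub_right (z : ℝ)
    have h3 : (fun x : ℝ => γ'' (x - (z : ℝ))) = γ'' := by
      funext x
      have h4 := hper''.sub_int_mul_eq (x := x) z
      simpa using h4
    rw [h3] at h2
    rw [zero_add, add_comm 1 (z : ℝ)] at h2
    exact h2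
  have hzn : ∀ (z : ℤ) (k : ℕ), IntervalIntegrable γ'' volume (z : ℝ) ((z : ℝ) + k) := by
    intro z k
    induction k with
    | zero => simp
    | succ j ih =>
      have h4 := hz (z + j)
      push_cast at h4
      have h5 := ih.trans h4
      have h6 : (z : ℝ) + ((j + 1 : ℕ) : ℝ) = (z : ℝ) + (j : ℝ) + 1 := by push_cast; ring
      rw [h6]
      exact h5
  have hii : ∀ a b : ℝ, IntervalIntegrable γ'' volume a b := by
    intro a b
    set z : ℤ := ⌊min a b⌋ with hzdef
    set k : ℕ := ⌈max a b - (z : ℝ)⌉₊ with hkdef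
    have h5 : (z : ℝ) ≤ min a b := Int.floor_le _
    have h6 : max a b ≤ (z : ℝ) + k := by
      have h7 := Nat.le_ceil (max a b - (z : ℝ))
      linarith
    refine (hzn z k).mono_set (Set.uIcc_subset_uIcc ?_ ?_) <;> rw [Set.mem_uIcc] <;> left
    · exact ⟨le_trans h5 (min_le_left a b), le_trans (le_max_left a b) h6⟩
    · exact ⟨le_trans h5 (min_le_right a b), le_trans (le_max_right a b) h6⟩
  have hnii : ∀ a b : ℝ, IntervalIntegrable (fun s => ‖γ'' s‖) volume a b :=
    fun a b => (hii a b).norm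
  -- periodicity of the tangent
  have hper' : ∀ s : ℝ, γ' (s + 1) = γ' s := by
    intro s
    have h1 : HasDerivAt (fun x : ℝ => γ (x + 1)) (γ' (s + 1)) s :=
      HasDerivAt.comp_add_const s 1 (hd1 (s + 1))
    have h2 : (fun x : ℝ => γ (x + 1)) = γ := funext fun x => hper x
    rw [h2] at h1
    exact h1.unique (hd1 s)
  -- the partition points as a function on ℕ
  set τ : ℕ → ℝ := fun j => if h : j < n' + 1 then t ⟨j, h⟩ else t 0 + 1 with hτ
  -- key per-edge estimate
  have hkey : ∀ i : Fin (n' + 1),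
      angle (γ' (t i)) (γ (t (i + 1)) - γ (t i))
        + angle (γ (t (i + 1)) - γ (t i)) (γ' (t (i + 1)))
        ≤ ∫ s in (τ (i : ℕ))..(τ ((i : ℕ) + 1)), ‖γ'' s‖ := by
    intro i
    have hival : τ (i : ℕ) = t i := by
      rw [hτ]
      simp only
      rw [dif_pos i.isLt]
    by_cases hlast : i = Fin.last n'
    · have hi1 : i + 1 = 0 := by rw [hlast]; exact Fin.last_add_one n'
      have hval : (i : ℕ) + 1 = n' + 1 := by rw [hlast]; simp [Fin.val_last]
      have hτ1 : τ ((i : ℕ) + 1) = t 0 + 1 := by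
        rw [hτ, hval]
        simp only
        rw [dif_neg (lt_irrefl (n' + 1))]
      have hcd : t i < t 0 + 1 := by
        have h8 := (hrange i).2
        have h9 := (hrange 0).1
        linarith
      have hWne : γ (t 0 + 1) - γ (t i) ≠ 0 := by
        rw [hper (t 0)]
        have := hedges i
        rw [hi1] at this
        exact sub_ne_zero.mpr this
      have h := edge_lemma γ γ' γ'' hd1 harc hac hii hcd hWne
      rw [hper (t 0), hper' (t 0)] at h
      rw [hival, hτ1, hi1]
      exact h
    · have hlt : (i : ℕ) + 1 < n' + 1 := by
        have h10 := i.isLt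
        rcases Nat.lt_or_ge ((i : ℕ) + 1) (n' + 1) with h | h
        · exact h
        · exfalso
          apply hlast
          apply Fin.ext
          rw [Fin.val_last]
          omega
      have hi1v : ((i + 1 : Fin (n' + 1)) : ℕ) = (i : ℕ) + 1 := by
        rw [Fin.val_add_one, if_neg hlast]
      have hτ1 : τ ((i : ℕ) + 1) = t (i + 1) := by
        rw [hτ]
        simp only
        rw [dif_pos hlt]
        congr 1
        exact Fin.ext hi1v.symm
      have hcd : t i < t (i + 1) := by
        apply hmono
        rw [Fin.lt_def, hi1v]
        omega
      have hWne : γ (t (i + 1)) - γ (t i) ≠ 0 := sub_ne_zero.mpr (hedges i)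
      have h := edge_lemma γ γ' γ'' hd1 harc hac hii hcd hWne
      rw [hival, hτ1]
      exact h
  -- assemble
  calc (∑ i : Fin (n' + 1), angle (γ (t i) - γ (t (i - 1))) (γ (t (i + 1)) - γ (t i)))
      ≤ ∑ i : Fin (n' + 1), (angle (γ (t i) - γ (t (i - 1))) (γ' (t i))
          + angle (γ' (t i)) (γ (t (i + 1)) - γ (t i))) :=
        Finset.sum_le_sum (fun i _ => my_angle_triangle _ _ _)
    _ = (∑ i : Fin (n' + 1), angle (γ (t (i + 1)) - γ (t i)) (γ' (t (i + 1))))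
          + ∑ i : Fin (n' + 1), angle (γ' (t i)) (γ (t (i + 1)) - γ (t i)) := by
        rw [Finset.sum_add_distrib]
        congr 1
        apply Fintype.sum_equiv (Equiv.subRight (1 : Fin (n' + 1)))
        intro i
        simp only [Equiv.subRight_apply]
        rw [sub_add_cancel]
    _ = ∑ i : Fin (n' + 1), (angle (γ' (t i)) (γ (t (i + 1)) - γ (t i))
          + angle (γ (t (i + 1)) - γ (t i)) (γ' (t (i + 1)))) := by
        rw [← Finset.sum_add_distrib]
        apply Finset.sum_congr rfl
        intro i _
        ring
    _ ≤ ∑ i : Fin (n' + 1), ∫ s in (τ (i : ℕ))..(τ ((i : ℕ) + 1)), ‖γ'' s‖ :=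
        Finset.sum_le_sum (fun i _ => hkey i)
    _ = ∑ k ∈ Finset.range (n' + 1), ∫ s in (τ k)..(τ (k + 1)), ‖γ'' s‖ :=
        Fin.sum_univ_eq_sum_range (fun k => ∫ s in (τ k)..(τ (k + 1)), ‖γ'' s‖) (n' + 1)
    _ = ∫ s in (τ 0)..(τ (n' + 1)), ‖γ'' s‖ :=
        intervalIntegral.sum_integral_adjacent_intervals (fun k _ => hnii _ _)
    _ = ∫ s in (t 0)..(t 0 + 1), ‖γ'' s‖ := by
        have hτ0 : τ 0 = t 0 := by
          rw [hτ]
          simp only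
          rw [dif_pos (Nat.succ_pos n')]
          congr 1
        have hτn : τ (n' + 1) = t 0 + 1 := by
          rw [hτ]
          simp only
          rw [dif_neg (lt_irrefl (n' + 1))]
        rw [hτ0, hτn]
    _ = ∫ s in (0:ℝ)..1, ‖γ'' s‖ := by
        have hpn : Function.Periodic (fun s => ‖γ'' s‖) 1 := fun x => by
          simp only
          rw [hper'' x]
        simpa using hpn.intervalIntegral_add_eq (t 0) 0
end
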